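/- arXiv:1908.01154 — 5 statements merged into one kernel-verified Lean document; each statement's English description precedes it below -/
import Mathlib

section
/- Let γ : [0,∞) → [0,∞) be a non-decreasing concave function, not identically zero. Then the function Φ_γ(p) = ( (1/Γ(1+p)) ∫₀^∞ γ(r)^p e^{-r} dr )^{1/p} is non-increasing in p on (-1, 0) ∪ (0, ∞). -/
open Real MeasureTheory Set

private lemma bern_ge {t m : ℝ} (ht : 0 < t) (hm : 1 ≤ m ∨ m ≤ 0) :
    1 + m * (t - 1) ≤ t ^ m := by
  rcases hm with hm | hm
  · have h := one_add_mul_self_le_rpow_one_add (s := t - 1) (by linarith) hm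
    simpa using h
  · have h1 : t ^ m = Real.exp (Real.log t * m) := Real.rpow_def_of_pos ht m
    have h2 : Real.log t * m + 1 ≤ Real.exp (Real.log t * m) := Real.add_one_le_exp _
    have h3 : Real.log t ≤ t - 1 := Real.log_le_sub_one_of_pos ht
    nlinarith [mul_nonneg (sub_nonneg.2 h3) (neg_nonneg.2 hm)]

private lemma bern_le {t m : ℝ} (ht : 0 < t) (hm0 : 0 ≤ m) (hm1 : m ≤ 1) :
    t ^ m ≤ 1 + m * (t - 1) := by
  have h := rpow_one_add_le_one_add_mul_self (s := t - 1) (by linarith) hm0 hm1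
  simpa using h

private lemma ratio_rpow {x y p q : ℝ} (hx : 0 < x) (hy : 0 < y) (hp : p ≠ 0) :
    (y ^ p / x ^ p) ^ (q / p) = y ^ q / x ^ q := by
  have hpq : p * (q / p) = q := by field_simp
  rw [Real.div_rpow (Real.rpow_nonneg hy.le p) (Real.rpow_nonneg hx.le p),
    ← Real.rpow_mul hy.le, ← Real.rpow_mul hx.le, hpq]

private lemma key_ineq {x y p q : ℝ} (hx : 0 < x) (hy : 0 < y) (hp : p ≠ 0)
    (hq : 0 < q) (hpq : p < q) :
    x ^ q - y ^ q ≤ q / p * (x ^ (q - p) * (x ^ p - y ^ p)) := by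
  have hxp : (0:ℝ) < x ^ p := Real.rpow_pos_of_pos hx p
  have hxq : (0:ℝ) < x ^ q := Real.rpow_pos_of_pos hx q
  have ht : 0 < y ^ p / x ^ p := div_pos (Real.rpow_pos_of_pos hy p) hxp
  have hm : 1 ≤ q / p ∨ q / p ≤ 0 := by
    rcases lt_or_gt_of_ne hp with h | h
    · exact Or.inr (le_of_lt (div_neg_of_pos_of_neg hq h))
    · exact Or.inl (le_of_lt ((one_lt_div h).2 hpq))
  have hb := bern_ge ht hm
  rw [ratio_rpow hx hy hp] at hb
  have h2 := mul_le_mul_of_nonneg_left hb hxq.le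
  have e0 : x ^ q * (y ^ q / x ^ q) = y ^ q := by field_simp
  rw [e0] at h2
  have e1 : x ^ q * (1 + q / p * (y ^ p / x ^ p - 1))
      = x ^ q + q / p * (x ^ q * y ^ p / x ^ p - x ^ q) := by field_simp
  rw [e1] at h2
  have e2 : x ^ (q - p) * (x ^ p - y ^ p) = x ^ q - x ^ q * y ^ p / x ^ p := by
    rw [Real.rpow_sub hx]; field_simp
  rw [e2]
  set B := x ^ q * y ^ p / x ^ p
  linarith [h2]

private lemma key_ineq_neg {x y p q : ℝ} (hx : 0 < x) (hy : 0 < y)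
    (hpq : p < q) (hq : q < 0) :
    q / p * (x ^ (q - p) * (x ^ p - y ^ p)) ≤ x ^ q - y ^ q := by
  have hp : p < 0 := lt_trans hpq hq
  have hxp : (0:ℝ) < x ^ p := Real.rpow_pos_of_pos hx p
  have hxq : (0:ℝ) < x ^ q := Real.rpow_pos_of_pos hx q
  have ht : 0 < y ^ p / x ^ p := div_pos (Real.rpow_pos_of_pos hy p) hxp
  have hm0 : 0 ≤ q / p := le_of_lt (div_pos_of_neg_of_neg hq hp)
  have hm1 : q / p ≤ 1 := by
    have e : q / p - 1 = (q - p) / p := by rw [sub_div, div_self hp.ne]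
    have h := div_nonpos_of_nonneg_of_nonpos (sub_nonneg.2 hpq.le) hp.le
    linarith [e ▸ h]
  have hb := bern_le ht hm0 hm1
  rw [ratio_rpow hx hy hp.ne] at hb
  have h2 := mul_le_mul_of_nonneg_left hb hxq.le
  have e0 : x ^ q * (y ^ q / x ^ q) = y ^ q := by field_simp
  rw [e0] at h2
  have e1 : x ^ q * (1 + q / p * (y ^ p / x ^ p - 1))
      = x ^ q + q / p * (x ^ q * y ^ p / x ^ p - x ^ q) := by field_simp
  rw [e1] at h2
  have e2 : x ^ (q - p) * (x ^ p - y ^ p) = x ^ q - x ^ q * y ^ p / x ^ p := by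
    rw [Real.rpow_sub hx]; field_simp
  rw [e2]
  set B := x ^ q * y ^ p / x ^ p
  linarith [h2]

private lemma mul_nonneg_of_nonpos_nonpos {a b : ℝ} (ha : a ≤ 0) (hb : b ≤ 0) : 0 ≤ a * b := by
  nlinarith

theorem berwald_one_dim_monotone (γ : ℝ → ℝ)
    (hnn : ∀ r ∈ Ici (0:ℝ), 0 ≤ γ r)
    (hmono : MonotoneOn γ (Ici 0))
    (hconc : ConcaveOn ℝ (Ici 0) γ)
    (hne : ∃ r ∈ Ici (0:ℝ), γ r ≠ 0)
    (hint : ∀ p : ℝ, -1 < p → IntegrableOn (fun r => γ r ^ p * Real.exp (-r)) (Ioi 0)) :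
    ∀ p q : ℝ, p ∈ Ioo (-1:ℝ) 0 ∪ Ioi 0 → q ∈ Ioo (-1:ℝ) 0 ∪ Ioi 0 → p ≤ q →
      ((1 / Real.Gamma (1 + q)) * ∫ r in Ioi (0:ℝ), γ r ^ q * Real.exp (-r)) ^ (1/q) ≤
      ((1 / Real.Gamma (1 + p)) * ∫ r in Ioi (0:ℝ), γ r ^ p * Real.exp (-r)) ^ (1/p) := by
  -- positivity of γ on (0,∞)
  obtain ⟨t0, ht0, hγt0⟩ := hne
  have hγt0' : 0 < γ t0 := lt_of_le_of_ne (hnn t0 ht0) (Ne.symm hγt0)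
  have hγ0 : 0 ≤ γ 0 := hnn 0 self_mem_Ici
  have hγpos : ∀ r : ℝ, 0 < r → 0 < γ r := by
    intro r hr
    rcases le_or_gt t0 r with h | h
    · exact lt_of_lt_of_le hγt0' (hmono ht0 (mem_Ici.2 hr.le) h)
    · have ht0pos : 0 < t0 := lt_trans hr h
      have ha : (0:ℝ) ≤ 1 - r / t0 := by
        have : r / t0 ≤ 1 := (div_le_one ht0pos).2 h.le
        linarith
      have hb : (0:ℝ) ≤ r / t0 := div_nonneg hr.le ht0pos.le
      have hab : (1 - r / t0) + r / t0 = 1 := by ring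
      have key := hconc.2 (self_mem_Ici) ht0 ha hb hab
      have hcomb : (1 - r / t0) • (0:ℝ) + (r / t0) • t0 = r := by
        simp [smul_eq_mul]; field_simp
      rw [hcomb] at key
      simp only [smul_eq_mul] at key
      have h1 : 0 ≤ (1 - r / t0) * γ 0 :=
        mul_nonneg (by have : r / t0 ≤ 1 := (div_le_one ht0pos).2 h.le; linarith) hγ0
      have h2 : 0 < r / t0 * γ t0 := mul_pos (div_pos hr ht0pos) hγt0'
      linarith
  intro p q hp hq hpq
  rcases eq_or_lt_of_le hpq with rfl | hplt
  · exact le_refl _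
  have hp' : -1 < p ∧ p ≠ 0 := by
    rcases hp with h | h
    · exact ⟨h.1, ne_of_lt h.2⟩
    · exact ⟨by linarith [mem_Ioi.1 h], ne_of_gt h⟩
  have hq' : -1 < q ∧ q ≠ 0 := by
    rcases hq with h | h
    · exact ⟨h.1, ne_of_lt h.2⟩
    · exact ⟨by linarith [mem_Ioi.1 h], ne_of_gt h⟩
  have hGpos : ∀ t : ℝ, -1 < t → 0 < Real.Gamma (1 + t) := fun t ht =>
    Real.Gamma_pos_of_pos (by linarith)
  have hGeq : ∀ t : ℝ, -1 < t →
      ∫ r in Ioi (0:ℝ), r ^ t * Real.exp (-r) = Real.Gamma (1 + t) := by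
    intro t ht
    rw [Real.Gamma_eq_integral (by linarith : (0:ℝ) < 1 + t)]
    refine setIntegral_congr_fun measurableSet_Ioi fun x hx => ?_
    rw [add_sub_cancel_left]
    exact mul_comm _ _
  have hRint : ∀ t : ℝ, -1 < t →
      IntegrableOn (fun r : ℝ => r ^ t * Real.exp (-r)) (Ioi 0) := by
    intro t ht
    refine (Real.GammaIntegral_convergent (s := 1 + t) (by linarith)).congr_fun
      (fun x hx => ?_) measurableSet_Ioi
    rw [add_sub_cancel_left]
    exact mul_comm _ _
  set Ip := ∫ r in Ioi (0:ℝ), γ r ^ p * Real.exp (-r) with hIp_def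
  set Iq := ∫ r in Ioi (0:ℝ), γ r ^ q * Real.exp (-r) with hIq_def
  have hIp_int := hint p hp'.1
  have hIq_int := hint q hq'.1
  have hIp_pos : 0 < Ip := by
    rw [hIp_def]
    rw [setIntegral_pos_iff_support_of_nonneg_ae ?_ hIp_int]
    · refine lt_of_lt_of_le ?_ (measure_mono (subset_inter (fun r (hr : r ∈ Ioi 0) => ?_) subset_rfl))
      · rw [Real.volume_Ioi]; exact ENNReal.zero_lt_top
      · exact ne_of_gt (mul_pos (Real.rpow_pos_of_pos (hγpos r hr) p) (Real.exp_pos (-r)))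
    · filter_upwards [ae_restrict_mem measurableSet_Ioi] with r hr
      exact mul_nonneg (Real.rpow_nonneg (hnn r (mem_Ici.2 (le_of_lt hr))) p) (Real.exp_pos _).le
  have hIq_nonneg : 0 ≤ Iq :=
    setIntegral_nonneg measurableSet_Ioi fun r hr =>
      mul_nonneg (Real.rpow_nonneg (hnn r (mem_Ici.2 (le_of_lt hr))) q) (Real.exp_pos _).le
  set c : ℝ := (Ip / Real.Gamma (1 + p)) ^ (1/p) with hc_def
  have hbase : 0 < Ip / Real.Gamma (1 + p) := div_pos hIp_pos (hGpos p hp'.1)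
  have hc : 0 < c := Real.rpow_pos_of_pos hbase _
  have hcp : c ^ p = Ip / Real.Gamma (1 + p) := by
    rw [hc_def, ← Real.rpow_mul hbase.le, one_div, inv_mul_cancel₀ hp'.2, Real.rpow_one]
  have hzero : ∫ r in Ioi (0:ℝ),
      (γ r ^ p * Real.exp (-r) - c ^ p * (r ^ p * Real.exp (-r))) = 0 := by
    rw [integral_sub hIp_int ((hRint p hp'.1).const_mul _), integral_const_mul,
      hGeq p hp'.1, hcp, div_mul_cancel₀ _ (hGpos p hp'.1).ne', ← hIp_def, sub_self]
  have hRHS : ((1 / Real.Gamma (1 + p)) * Ip) ^ (1/p) = c := by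
    rw [hc_def, one_div, inv_mul_eq_div]
  have hcq : (c ^ q) ^ (1/q) = c := by
    rw [← Real.rpow_mul hc.le, mul_one_div, div_self hq'.2, Real.rpow_one]
  by_cases hN : ∃ r : ℝ, 0 < r ∧ γ r < c * r
  case neg =>
    -- γ(r) ≥ c r for all r > 0 ⇒ equality a.e.
    push_neg at hN
    have haeq : ∀ᵐ r ∂(volume.restrict (Ioi (0:ℝ))),
        γ r ^ p * Real.exp (-r) = c ^ p * (r ^ p * Real.exp (-r)) := by
      have hps : 0 < p ∨ p < 0 := by
        rcases lt_or_gt_of_ne hp'.2 with h | h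
        · exact Or.inr h
        · exact Or.inl h
      rcases hps with hps | hps
      · have h0 := (setIntegral_eq_zero_iff_of_nonneg_ae (f := fun r =>
            γ r ^ p * Real.exp (-r) - c ^ p * (r ^ p * Real.exp (-r))) ?_
            (hIp_int.sub ((hRint p hp'.1).const_mul _))).1 hzero
        · filter_upwards [h0] with r hr
          have : γ r ^ p * Real.exp (-r) - c ^ p * (r ^ p * Real.exp (-r)) = 0 := hr
          linarith
        · filter_upwards [ae_restrict_mem measurableSet_Ioi] with r hr
          have hrpos : (0:ℝ) < r := hr
          have h1 : (c * r) ^ p ≤ γ r ^ p :=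
            Real.rpow_le_rpow (mul_pos hc hrpos).le (hN r hrpos) hps.le
          rw [Real.mul_rpow hc.le hrpos.le] at h1
          have := Real.exp_pos (-r)
          simp only [Pi.zero_apply, sub_nonneg]
          nlinarith
      · have h0 := (setIntegral_eq_zero_iff_of_nonneg_ae (f := fun r =>
            c ^ p * (r ^ p * Real.exp (-r)) - γ r ^ p * Real.exp (-r)) ?_
            (((hRint p hp'.1).const_mul _).sub hIp_int)).1 ?_
        · filter_upwards [h0] with r hr
          have : c ^ p * (r ^ p * Real.exp (-r)) - γ r ^ p * Real.exp (-r) = 0 := hr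
          linarith
        · filter_upwards [ae_restrict_mem measurableSet_Ioi] with r hr
          have hrpos : (0:ℝ) < r := hr
          have h1 : γ r ^ p ≤ (c * r) ^ p :=
            Real.rpow_le_rpow_of_nonpos (mul_pos hc hrpos) (hN r hrpos) hps.le
          rw [Real.mul_rpow hc.le hrpos.le] at h1
          have := Real.exp_pos (-r)
          simp only [Pi.zero_apply, sub_nonneg]
          nlinarith
        · rw [integral_sub (((hRint p hp'.1)).const_mul _) hIp_int]
          rw [integral_sub hIp_int ((hRint p hp'.1).const_mul _)] at hzero
          linarith
    have haeq2 : ∀ᵐ r ∂(volume.restrict (Ioi (0:ℝ))),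
        γ r ^ q * Real.exp (-r) = c ^ q * (r ^ q * Real.exp (-r)) := by
      filter_upwards [haeq, ae_restrict_mem measurableSet_Ioi] with r h1 h2
      have hrpos : (0:ℝ) < r := h2
      have hxp : γ r ^ p = (c * r) ^ p := by
        have he := Real.exp_ne_zero (-r)
        have h1' : γ r ^ p * Real.exp (-r) = (c ^ p * r ^ p) * Real.exp (-r) := by
          rw [h1]; ring
        have := mul_right_cancel₀ he h1'
        rw [this, Real.mul_rpow hc.le hrpos.le]
      have hγr : γ r = c * r := by
        have h3 : (γ r ^ p) ^ (1/p) = ((c * r) ^ p) ^ (1/p) := by rw [hxp]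
        rwa [← Real.rpow_mul (hγpos r hrpos).le, mul_one_div, div_self hp'.2,
          Real.rpow_one, ← Real.rpow_mul (mul_pos hc hrpos).le, mul_one_div,
          div_self hp'.2, Real.rpow_one] at h3
      rw [hγr, Real.mul_rpow hc.le hrpos.le]; ring
    have hIq_eq : Iq = c ^ q * Real.Gamma (1 + q) := by
      rw [hIq_def, setIntegral_congr_ae measurableSet_Ioi
        ((ae_restrict_iff' measurableSet_Ioi).1 haeq2), integral_const_mul, hGeq q hq'.1]
    rw [hRHS, hIq_eq]
    have : (1 / Real.Gamma (1 + q)) * (c ^ q * Real.Gamma (1 + q)) = c ^ q := by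
      rw [one_div, inv_mul_eq_div, mul_div_assoc, div_self (hGpos q hq'.1).ne', mul_one]
    rw [this, hcq]
  case pos =>
    obtain ⟨r0, hr0⟩ := hN
    set N : Set ℝ := {r | 0 < r ∧ γ r < c * r} with hN_def
    have hNne : N.Nonempty := ⟨r0, hr0⟩
    have hNbdd : BddBelow N := ⟨0, fun r hr => hr.1.le⟩
    set s := sInf N with hs_def
    have hs0 : 0 ≤ s := le_csInf hNne fun r hr => hr.1.le
    have hupper : ∀ r, s < r → γ r ≤ c * r := by
      intro r hrs
      by_contra hcon
      push_neg at hcon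
      obtain ⟨r1, hr1N, hr1r⟩ := exists_lt_of_csInf_lt hNne hrs
      have h01 : 0 < r1 := hr1N.1
      have hrpos : 0 < r := lt_trans h01 hr1r
      have ha : (0:ℝ) ≤ (r - r1)/r := div_nonneg (by linarith) hrpos.le
      have hb : (0:ℝ) ≤ r1/r := div_nonneg h01.le hrpos.le
      have hab : (r - r1)/r + r1/r = 1 := by field_simp; ring
      have key := hconc.2 (self_mem_Ici) (mem_Ici.2 hrpos.le) ha hb hab
      have hcomb : ((r - r1)/r) • (0:ℝ) + (r1/r) • r = r1 := by
        simp [smul_eq_mul]; field_simp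
      rw [hcomb] at key
      simp only [smul_eq_mul] at key
      have h1 : 0 ≤ (r - r1)/r * γ 0 := mul_nonneg (div_nonneg (by linarith) hrpos.le) hγ0
      have h2 : r1/r * (c * r) < r1/r * γ r :=
        mul_lt_mul_of_pos_left hcon (div_pos h01 hrpos)
      have h3 : r1/r * (c * r) = c * r1 := by field_simp
      have h4 : γ r1 < c * r1 := hr1N.2
      linarith
    have hlower : ∀ r, 0 < r → r < s → c * r ≤ γ r := by
      intro r h0 hrs
      by_contra hcon
      push_neg at hcon
      exact (notMem_of_lt_csInf hrs hNbdd) ⟨h0, hcon⟩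
    set W := γ s ^ (q - p) with hW_def
    have hqp : 0 < q - p := sub_pos.2 hplt
    have hγs : 0 ≤ γ s := hnn s hs0
    have hA_le : ∀ r, 0 < r → r ≤ s → γ r ^ (q - p) ≤ W := fun r hr hrs =>
      Real.rpow_le_rpow (hγpos r hr).le (hmono (mem_Ici.2 hr.le) (mem_Ici.2 hs0) hrs) hqp.le
    have hA_ge : ∀ r, s ≤ r → W ≤ γ r ^ (q - p) := fun r hrs =>
      Real.rpow_le_rpow hγs (hmono (mem_Ici.2 hs0) (mem_Ici.2 (hs0.trans hrs)) hrs) hqp.le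
    have hΓq := hGpos q hq'.1
    rcases hq with hqIoo | hqIoi
    · -- case q < 0 (hence p < q < 0)
      have hq0 : q < 0 := hqIoo.2
      have hp0 : p < 0 := lt_trans hplt hq0
      have hqp0 : 0 ≤ q / p := le_of_lt (div_pos_of_neg_of_neg hq0 hp0)
      have hpt : ∀ r ∈ Ioi (0:ℝ),
          (q / p * W) * (γ r ^ p * Real.exp (-r) - c ^ p * (r ^ p * Real.exp (-r))) ≤
            γ r ^ q * Real.exp (-r) - c ^ q * (r ^ q * Real.exp (-r)) := by
        intro r hr
        have hrpos : (0:ℝ) < r := hr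
        have hx := hγpos r hrpos
        have hy : 0 < c * r := mul_pos hc hrpos
        have h1 : q / p * (γ r ^ (q - p) * (γ r ^ p - (c * r) ^ p)) ≤ γ r ^ q - (c * r) ^ q :=
          key_ineq_neg hx hy hplt hq0
        have h2 : 0 ≤ q / p * ((γ r ^ (q - p) - W) * (γ r ^ p - (c * r) ^ p)) := by
          rcases lt_trichotomy r s with hrs | hrs | hrs
          · have hcr := hlower r hrpos hrs
            have hAW : γ r ^ (q - p) - W ≤ 0 := sub_nonpos.2 (hA_le r hrpos hrs.le)
            have hd : γ r ^ p - (c * r) ^ p ≤ 0 :=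
              sub_nonpos.2 (Real.rpow_le_rpow_of_nonpos hy hcr hp0.le)
            exact mul_nonneg hqp0 (mul_nonneg_of_nonpos_nonpos hAW hd)
          · have hz : γ r ^ (q - p) - W = 0 := by rw [hrs, hW_def, sub_self]
            rw [hz, zero_mul, mul_zero]
          · have hcr := hupper r hrs
            have hAW : 0 ≤ γ r ^ (q - p) - W := sub_nonneg.2 (hA_ge r hrs.le)
            have hd : 0 ≤ γ r ^ p - (c * r) ^ p :=
              sub_nonneg.2 (Real.rpow_le_rpow_of_nonpos hx hcr hp0.le)
            exact mul_nonneg hqp0 (mul_nonneg hAW hd)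
        have hring : q / p * ((γ r ^ (q - p) - W) * (γ r ^ p - (c * r) ^ p)) =
            q / p * (γ r ^ (q - p) * (γ r ^ p - (c * r) ^ p)) -
              (q / p * W) * (γ r ^ p - (c * r) ^ p) := by ring
        have h4 : (q / p * W) * (γ r ^ p - (c * r) ^ p) ≤ γ r ^ q - (c * r) ^ q := by
          linarith [h1, h2, hring]
        have h5 := mul_le_mul_of_nonneg_right h4 (Real.exp_pos (-r)).le
        have e1' : γ r ^ q * Real.exp (-r) - c ^ q * (r ^ q * Real.exp (-r)) =
            (γ r ^ q - (c * r) ^ q) * Real.exp (-r) := by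
          rw [Real.mul_rpow hc.le hrpos.le]; ring
        have e2' : γ r ^ p * Real.exp (-r) - c ^ p * (r ^ p * Real.exp (-r)) =
            (γ r ^ p - (c * r) ^ p) * Real.exp (-r) := by
          rw [Real.mul_rpow hc.le hrpos.le]; ring
        rw [e1', e2', ← mul_assoc]
        exact h5
      have hInt1 : IntegrableOn
          (fun r => γ r ^ q * Real.exp (-r) - c ^ q * (r ^ q * Real.exp (-r))) (Ioi 0) :=
        hIq_int.sub ((hRint q hq'.1).const_mul _)
      have hInt2 : IntegrableOn
          (fun r => (q / p * W) *
            (γ r ^ p * Real.exp (-r) - c ^ p * (r ^ p * Real.exp (-r)))) (Ioi 0) :=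
        (hIp_int.sub ((hRint p hp'.1).const_mul _)).const_mul _
      have hmono_int := setIntegral_mono_on hInt2 hInt1 measurableSet_Ioi hpt
      rw [integral_const_mul, hzero, mul_zero,
        integral_sub hIq_int ((hRint q hq'.1).const_mul _), integral_const_mul,
        hGeq q hq'.1, ← hIq_def] at hmono_int
      have hcqpos : 0 < c ^ q := Real.rpow_pos_of_pos hc q
      have hle : c ^ q ≤ 1 / Real.Gamma (1 + q) * Iq := by
        rw [one_div, inv_mul_eq_div, le_div_iff₀ hΓq]
        linarith
      rw [hRHS]
      calc (1 / Real.Gamma (1 + q) * Iq) ^ (1/q) ≤ (c ^ q) ^ (1/q) :=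
            Real.rpow_le_rpow_of_nonpos hcqpos hle (le_of_lt (one_div_neg.2 hq0))
        _ = c := hcq
    · -- case 0 < q
      have hq0 : (0:ℝ) < q := hqIoi
      have hps : p < 0 ∨ 0 < p := by
        rcases hp with h | h
        · exact Or.inl h.2
        · exact Or.inr h
      have hpt : ∀ r ∈ Ioi (0:ℝ),
          γ r ^ q * Real.exp (-r) - c ^ q * (r ^ q * Real.exp (-r)) ≤
            (q / p * W) * (γ r ^ p * Real.exp (-r) - c ^ p * (r ^ p * Real.exp (-r))) := by
        intro r hr
        have hrpos : (0:ℝ) < r := hr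
        have hx := hγpos r hrpos
        have hy : 0 < c * r := mul_pos hc hrpos
        have h1 : γ r ^ q - (c * r) ^ q ≤ q / p * (γ r ^ (q - p) * (γ r ^ p - (c * r) ^ p)) :=
          key_ineq hx hy hp'.2 hq0 hplt
        have h2 : q / p * ((γ r ^ (q - p) - W) * (γ r ^ p - (c * r) ^ p)) ≤ 0 := by
          rcases lt_trichotomy r s with hrs | hrs | hrs
          · have hcr := hlower r hrpos hrs
            have hAW : γ r ^ (q - p) - W ≤ 0 := sub_nonpos.2 (hA_le r hrpos hrs.le)
            rcases hps with hp0 | hp0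
            · have hd : γ r ^ p - (c * r) ^ p ≤ 0 :=
                sub_nonpos.2 (Real.rpow_le_rpow_of_nonpos hy hcr hp0.le)
              exact mul_nonpos_iff.2 (Or.inr ⟨le_of_lt (div_neg_of_pos_of_neg hq0 hp0),
                mul_nonneg_of_nonpos_nonpos hAW hd⟩)
            · have hd : 0 ≤ γ r ^ p - (c * r) ^ p :=
                sub_nonneg.2 (Real.rpow_le_rpow hy.le hcr hp0.le)
              exact mul_nonpos_iff.2 (Or.inl ⟨le_of_lt (div_pos hq0 hp0),
                mul_nonpos_iff.2 (Or.inr ⟨hAW, hd⟩)⟩)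
          · have hz : γ r ^ (q - p) - W = 0 := by rw [hrs, hW_def, sub_self]
            rw [hz, zero_mul, mul_zero]
          · have hcr := hupper r hrs
            have hAW : 0 ≤ γ r ^ (q - p) - W := sub_nonneg.2 (hA_ge r hrs.le)
            rcases hps with hp0 | hp0
            · have hd : 0 ≤ γ r ^ p - (c * r) ^ p :=
                sub_nonneg.2 (Real.rpow_le_rpow_of_nonpos hx hcr hp0.le)
              exact mul_nonpos_iff.2 (Or.inr ⟨le_of_lt (div_neg_of_pos_of_neg hq0 hp0),
                mul_nonneg hAW hd⟩)
            · have hd : γ r ^ p - (c * r) ^ p ≤ 0 :=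
                sub_nonpos.2 (Real.rpow_le_rpow hx.le hcr hp0.le)
              exact mul_nonpos_iff.2 (Or.inl ⟨le_of_lt (div_pos hq0 hp0),
                mul_nonpos_iff.2 (Or.inl ⟨hAW, hd⟩)⟩)
        have hring : q / p * ((γ r ^ (q - p) - W) * (γ r ^ p - (c * r) ^ p)) =
            q / p * (γ r ^ (q - p) * (γ r ^ p - (c * r) ^ p)) -
              (q / p * W) * (γ r ^ p - (c * r) ^ p) := by ring
        have h4 : γ r ^ q - (c * r) ^ q ≤ (q / p * W) * (γ r ^ p - (c * r) ^ p) := by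
          linarith [h1, h2, hring]
        have h5 := mul_le_mul_of_nonneg_right h4 (Real.exp_pos (-r)).le
        have e1' : γ r ^ q * Real.exp (-r) - c ^ q * (r ^ q * Real.exp (-r)) =
            (γ r ^ q - (c * r) ^ q) * Real.exp (-r) := by
          rw [Real.mul_rpow hc.le hrpos.le]; ring
        have e2' : γ r ^ p * Real.exp (-r) - c ^ p * (r ^ p * Real.exp (-r)) =
            (γ r ^ p - (c * r) ^ p) * Real.exp (-r) := by
          rw [Real.mul_rpow hc.le hrpos.le]; ring
        rw [e1', e2', ← mul_assoc]
        exact h5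
      have hInt1 : IntegrableOn
          (fun r => γ r ^ q * Real.exp (-r) - c ^ q * (r ^ q * Real.exp (-r))) (Ioi 0) :=
        hIq_int.sub ((hRint q hq'.1).const_mul _)
      have hInt2 : IntegrableOn
          (fun r => (q / p * W) *
            (γ r ^ p * Real.exp (-r) - c ^ p * (r ^ p * Real.exp (-r)))) (Ioi 0) :=
        (hIp_int.sub ((hRint p hp'.1).const_mul _)).const_mul _
      have hmono_int := setIntegral_mono_on hInt1 hInt2 measurableSet_Ioi hpt
      rw [integral_const_mul, hzero, mul_zero,
        integral_sub hIq_int ((hRint q hq'.1).const_mul _), integral_const_mul,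
        hGeq q hq'.1, ← hIq_def] at hmono_int
      have hle : 1 / Real.Gamma (1 + q) * Iq ≤ c ^ q := by
        rw [one_div, inv_mul_eq_div, div_le_iff₀ hΓq]
        linarith
      rw [hRHS]
      calc (1 / Real.Gamma (1 + q) * Iq) ^ (1/q) ≤ (c ^ q) ^ (1/q) :=
            Real.rpow_le_rpow (mul_nonneg (le_of_lt (by positivity)) hIq_nonneg) hle
              (le_of_lt (one_div_pos.2 hq0))
        _ = c := hcq
end

section
/- Let γ : [0,∞) → [0,∞) be a non-decreasing concave function and suppose that for some -1 < p₁ < p₂ with p₁, p₂ ≠ 0 one has Φ_γ(p₁) = Φ_γ(p₂), where Φ_γ(p) = ( (1/Γ(1+p)) ∫₀^∞ γ(r)^p e^{-r} dr )^{1/p}. Then γ is linear, i.e., γ(r) = c·r for some constant c ≥ 0, and Φ_γ is constant on (-1,∞)\{0}. -/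
open Real MeasureTheory Set Filter Topology

noncomputable def Fb (p q t₀ : ℝ) : ℝ → ℝ := fun u => (1/p) * u ^ (p/q) - (1/q) * t₀ ^ (p-q) * u

lemma Fb_hasDerivAt (p q t₀ : ℝ) (hp : p ≠ 0) {u : ℝ} (hu : 0 < u) :
    HasDerivAt (Fb p q t₀) ((1/q) * u ^ (p/q - 1) - (1/q) * t₀ ^ (p-q)) u := by
  have h1 : HasDerivAt (fun x : ℝ => x ^ (p/q)) (p/q * u ^ (p/q - 1)) u :=
    Real.hasDerivAt_rpow_const (Or.inl hu.ne')
  have h2 := (h1.const_mul (1/p)).sub ((hasDerivAt_id u).const_mul ((1/q) * t₀ ^ (p-q)))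
  have e : (1/p) * (p/q) = 1/q := by field_simp
  have h3 : HasDerivAt (Fb p q t₀) (1/p * (p/q * u^(p/q-1)) - 1/q * t₀^(p-q) * 1) u := h2
  exact h3.congr_deriv (by linear_combination e * u ^ (p/q-1))

lemma t₀_pow_eq (p q t₀ : ℝ) (hq : q ≠ 0) (ht : 0 < t₀) :
    t₀ ^ (p - q) = (t₀ ^ q) ^ (p/q - 1) := by
  rw [← Real.rpow_mul ht.le]
  congr 1
  field_simp

lemma Fb_deriv_sign (p q t₀ : ℝ) (hp : p ≠ 0) (hq : q ≠ 0) (hpq : p < q) (ht : 0 < t₀)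
    {u : ℝ} (hu : 0 < u) :
    (u < t₀ ^ q → 0 < (1/q) * u ^ (p/q - 1) - (1/q) * t₀ ^ (p-q)) ∧
    (t₀ ^ q < u → (1/q) * u ^ (p/q - 1) - (1/q) * t₀ ^ (p-q) < 0) := by
  rw [t₀_pow_eq p q t₀ hq ht]
  have htq : (0:ℝ) < t₀ ^ q := Real.rpow_pos_of_pos ht q
  rcases lt_or_gt_of_ne hq with hqneg | hqpos
  · -- q < 0, exponent p/q - 1 > 0
    have he : 0 < p/q - 1 := by
      rw [sub_pos]
      exact (one_lt_div_of_neg hqneg).mpr hpq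
    constructor
    · intro h
      have : u ^ (p/q-1) < (t₀ ^ q) ^ (p/q-1) := Real.rpow_lt_rpow hu.le h he
      have h1q : (1:ℝ)/q < 0 := div_neg_of_pos_of_neg one_pos hqneg
      nlinarith [mul_neg_of_neg_of_pos h1q (sub_pos.mpr this)]
    · intro h
      have : (t₀ ^ q) ^ (p/q-1) < u ^ (p/q-1) := Real.rpow_lt_rpow htq.le h he
      have h1q : (1:ℝ)/q < 0 := div_neg_of_pos_of_neg one_pos hqneg
      nlinarith [mul_neg_of_neg_of_pos h1q (sub_pos.mpr this)]
  · -- q > 0, exponent p/q - 1 < 0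
    have he : p/q - 1 < 0 := by
      rw [sub_neg]
      exact (div_lt_one hqpos).mpr hpq
    have h1q : (0:ℝ) < 1/q := by positivity
    constructor
    · intro h
      have : (t₀ ^ q) ^ (p/q-1) < u ^ (p/q-1) := Real.rpow_lt_rpow_of_neg hu h he
      nlinarith [mul_pos h1q (sub_pos.mpr this)]
    · intro h
      have : u ^ (p/q-1) < (t₀ ^ q) ^ (p/q-1) := Real.rpow_lt_rpow_of_neg htq h he
      nlinarith [mul_pos h1q (sub_pos.mpr this)]

lemma Fb_strictMonoOn (p q t₀ : ℝ) (hp : p ≠ 0) (hq : q ≠ 0) (hpq : p < q) (ht : 0 < t₀) :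
    StrictMonoOn (Fb p q t₀) (Ioc 0 (t₀ ^ q)) := by
  have htq : (0:ℝ) < t₀ ^ q := Real.rpow_pos_of_pos ht q
  apply strictMonoOn_of_deriv_pos (convex_Ioc 0 (t₀ ^ q))
  · intro u hu
    exact ((Fb_hasDerivAt p q t₀ hp hu.1).continuousAt).continuousWithinAt
  · intro u hu
    rw [interior_Ioc] at hu
    rw [(Fb_hasDerivAt p q t₀ hp hu.1).deriv]
    exact (Fb_deriv_sign p q t₀ hp hq hpq ht hu.1).1 hu.2

lemma Fb_strictAntiOn (p q t₀ : ℝ) (hp : p ≠ 0) (hq : q ≠ 0) (hpq : p < q) (ht : 0 < t₀) :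
    StrictAntiOn (Fb p q t₀) (Ici (t₀ ^ q)) := by
  have htq : (0:ℝ) < t₀ ^ q := Real.rpow_pos_of_pos ht q
  apply strictAntiOn_of_deriv_neg (convex_Ici (t₀ ^ q))
  · intro u hu
    exact ((Fb_hasDerivAt p q t₀ hp (lt_of_lt_of_le htq hu)).continuousAt).continuousWithinAt
  · intro u hu
    rw [interior_Ici] at hu
    rw [(Fb_hasDerivAt p q t₀ hp (htq.trans hu)).deriv]
    exact (Fb_deriv_sign p q t₀ hp hq hpq ht (htq.trans hu)).2 hu

lemma key_lt (p q t₀ x y : ℝ) (hp : p ≠ 0) (hq : q ≠ 0) (hpq : p < q) (ht : 0 < t₀)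
    (hx : 0 < x) (hy : 0 < y)
    (hcfg : (y ≤ x ∧ x ≤ t₀) ∨ (t₀ ≤ x ∧ x ≤ y)) (hne : x ≠ y) :
    (1/q) * t₀ ^ (p-q) * (x ^ q - y ^ q) < (1/p) * (x ^ p - y ^ p) := by
  have htq : (0:ℝ) < t₀ ^ q := Real.rpow_pos_of_pos ht q
  have hxq : (0:ℝ) < x ^ q := Real.rpow_pos_of_pos hx q
  have hyq : (0:ℝ) < y ^ q := Real.rpow_pos_of_pos hy q
  have hxp : (x ^ q) ^ (p/q) = x ^ p := by
    rw [← Real.rpow_mul hx.le]; congr 1; field_simp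
  have hyp : (y ^ q) ^ (p/q) = y ^ p := by
    rw [← Real.rpow_mul hy.le]; congr 1; field_simp
  have hmain : Fb p q t₀ (y ^ q) < Fb p q t₀ (x ^ q) := by
    rcases lt_or_gt_of_ne hq with hqneg | hqpos
    · rcases hcfg with ⟨hyx, hxt⟩ | ⟨htx, hxy⟩
      · -- y < x ≤ t₀ ; q<0 : t₀^q ≤ x^q < y^q
        have hyx' : y < x := lt_of_le_of_ne hyx (Ne.symm hne)
        have h1 : t₀ ^ q ≤ x ^ q := Real.rpow_le_rpow_of_nonpos hx hxt hqneg.le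
        have h2 : x ^ q < y ^ q := Real.rpow_lt_rpow_of_neg hy hyx' hqneg
        exact Fb_strictAntiOn p q t₀ hp hq hpq ht (mem_Ici.mpr h1)
          (mem_Ici.mpr (h1.trans h2.le)) h2
      · -- t₀ ≤ x < y ; q<0 : y^q < x^q ≤ t₀^q
        have hxy' : x < y := lt_of_le_of_ne hxy hne
        have h1 : x ^ q ≤ t₀ ^ q := Real.rpow_le_rpow_of_nonpos ht htx hqneg.le
        have h2 : y ^ q < x ^ q := Real.rpow_lt_rpow_of_neg hx hxy' hqneg
        exact Fb_strictMonoOn p q t₀ hp hq hpq ht ⟨hyq, h2.le.trans h1⟩ ⟨hxq, h1⟩ h2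
    · rcases hcfg with ⟨hyx, hxt⟩ | ⟨htx, hxy⟩
      · -- y < x ≤ t₀ ; q>0 : y^q < x^q ≤ t₀^q
        have hyx' : y < x := lt_of_le_of_ne hyx (Ne.symm hne)
        have h1 : x ^ q ≤ t₀ ^ q := Real.rpow_le_rpow hx.le hxt hqpos.le
        have h2 : y ^ q < x ^ q := Real.rpow_lt_rpow hy.le hyx' hqpos
        exact Fb_strictMonoOn p q t₀ hp hq hpq ht ⟨hyq, h2.le.trans h1⟩ ⟨hxq, h1⟩ h2
      · -- t₀ ≤ x < y ; q>0 : t₀^q ≤ x^q < y^q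
        have hxy' : x < y := lt_of_le_of_ne hxy hne
        have h1 : t₀ ^ q ≤ x ^ q := Real.rpow_le_rpow ht.le htx hqpos.le
        have h2 : x ^ q < y ^ q := Real.rpow_lt_rpow hx.le hxy' hqpos
        exact Fb_strictAntiOn p q t₀ hp hq hpq ht (mem_Ici.mpr h1)
          (mem_Ici.mpr (h1.trans h2.le)) h2
  simp only [Fb, hxp, hyp] at hmain
  linarith

lemma key_le (p q t₀ x y : ℝ) (hp : p ≠ 0) (hq : q ≠ 0) (hpq : p < q) (ht : 0 < t₀)
    (hx : 0 < x) (hy : 0 < y)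
    (hcfg : (y ≤ x ∧ x ≤ t₀) ∨ (t₀ ≤ x ∧ x ≤ y)) :
    (1/q) * t₀ ^ (p-q) * (x ^ q - y ^ q) ≤ (1/p) * (x ^ p - y ^ p) := by
  rcases eq_or_ne x y with rfl | hne
  · simp
  · exact (key_lt p q t₀ x y hp hq hpq ht hx hy hcfg hne).le

lemma vanish (f : ℝ → ℝ) (hc : ContinuousOn f (Ioi 0))
    (hnn : ∀ r ∈ Ioi (0:ℝ), 0 ≤ f r) (hi : IntegrableOn f (Ioi 0))
    (hz : (∫ r in Ioi (0:ℝ), f r) = 0) : ∀ r ∈ Ioi (0:ℝ), f r = 0 := by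
  have hae0 : 0 ≤ᵐ[volume.restrict (Ioi (0:ℝ))] f :=
    (ae_restrict_iff' measurableSet_Ioi).2 (ae_of_all _ hnn)
  have hae : f =ᵐ[volume.restrict (Ioi (0:ℝ))] 0 :=
    (integral_eq_zero_iff_of_nonneg_ae hae0 hi).1 hz
  have hae' : ∀ᵐ r ∂(volume : Measure ℝ), r ∈ Ioi (0:ℝ) → f r = 0 :=
    (ae_restrict_iff' measurableSet_Ioi).1 hae
  intro r hr
  by_contra hne
  have hpos : 0 < f r := lt_of_le_of_ne (hnn r hr) (Ne.symm hne)
  have hct : ContinuousAt f r := hc.continuousAt (isOpen_Ioi.mem_nhds hr)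
  have h1 : ∀ᶠ s in 𝓝 r, 0 < f s := continuousAt_const.eventually_lt hct hpos
  have h2 : ∀ᶠ s in 𝓝 r, s ∈ Ioi (0:ℝ) := isOpen_Ioi.eventually_mem hr
  obtain ⟨ε, hε, hball⟩ := Metric.eventually_nhds_iff_ball.1 (h1.and h2)
  have hsub : Metric.ball r ε ⊆ {s | ¬ (s ∈ Ioi (0:ℝ) → f s = 0)} := by
    intro s hs
    obtain ⟨h3, h4⟩ := hball s hs
    simp only [mem_setOf_eq]
    intro h5
    exact absurd (h5 h4) (ne_of_gt h3)
  have hnull : volume {s | ¬ (s ∈ Ioi (0:ℝ) → f s = 0)} = 0 := hae'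
  have := measure_mono_null hsub hnull
  rw [Real.volume_ball] at this
  simp [ENNReal.ofReal_eq_zero] at this
  linarith

lemma integral_linear_rpow (c p : ℝ) (hc : 0 < c) (hp : -1 < p) :
    (∫ r in Ioi (0:ℝ), (c * r) ^ p * Real.exp (-r)) = c ^ p * Real.Gamma (1 + p) := by
  have h1 : Real.Gamma (1 + p) = ∫ x in Ioi (0:ℝ), Real.exp (-x) * x ^ ((1+p) - 1) :=
    Real.Gamma_eq_integral (by linarith)
  have h2 : (∫ r in Ioi (0:ℝ), (c * r) ^ p * Real.exp (-r))
      = ∫ r in Ioi (0:ℝ), c ^ p * (Real.exp (-r) * r ^ ((1+p)-1)) := by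
    apply setIntegral_congr_fun measurableSet_Ioi
    intro r hr
    dsimp only
    rw [Real.mul_rpow hc.le (le_of_lt hr)]
    simp only [add_sub_cancel_left]
    ring
  rw [h2, MeasureTheory.integral_const_mul, ← h1]

lemma integrable_linear_rpow (c p : ℝ) (hc : 0 < c) (hp : -1 < p) :
    IntegrableOn (fun r => (c * r) ^ p * Real.exp (-r)) (Ioi (0:ℝ)) := by
  have h0 := Real.GammaIntegral_convergent (s := 1 + p) (by linarith)
  have h1 : IntegrableOn (fun x : ℝ => c ^ p * (Real.exp (-x) * x ^ ((1+p) - 1))) (Ioi 0) :=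
    h0.const_mul _
  apply h1.congr_fun _ measurableSet_Ioi
  intro r hr
  dsimp only
  rw [Real.mul_rpow hc.le (le_of_lt hr)]
  simp only [add_sub_cancel_left]
  ring

lemma integral_pos_of_pos (f : ℝ → ℝ) (hf : ∀ r ∈ Ioi (0:ℝ), 0 < f r)
    (hi : IntegrableOn f (Ioi 0)) : 0 < ∫ r in Ioi (0:ℝ), f r := by
  have hae0 : 0 ≤ᵐ[volume.restrict (Ioi (0:ℝ))] f :=
    (ae_restrict_iff' measurableSet_Ioi).2 (ae_of_all _ (fun r hr => (hf r hr).le))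
  rw [setIntegral_pos_iff_support_of_nonneg_ae hae0 hi]
  have hsub : Ioi (0:ℝ) ⊆ Function.support f ∩ Ioi 0 := by
    intro r hr
    exact ⟨ne_of_gt (hf r hr), hr⟩
  calc (0:ENNReal) < volume (Ioi (0:ℝ)) := by simp [Real.volume_Ioi]
  _ ≤ volume (Function.support f ∩ Ioi 0) := measure_mono hsub

lemma rpow_inj_pos {x y q : ℝ} (hx : 0 < x) (hy : 0 < y) (hq : q ≠ 0) (h : x ^ q = y ^ q) :
    x = y := by
  have h2 := congrArg (fun z : ℝ => z ^ (1/q)) h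
  simpa [← Real.rpow_mul hx.le, ← Real.rpow_mul hy.le, mul_inv_cancel₀ hq] using h2

lemma conc_comb (γ : ℝ → ℝ) (hconc : ConcaveOn ℝ (Ici 0) γ) (c : ℝ) {u v w : ℝ}
    (hu : 0 ≤ u) (huv : u ≤ v) (hvw : v ≤ w) (huw : u < w) :
    ((w-v)/(w-u)) * (γ u - c*u) + ((v-u)/(w-u)) * (γ w - c*w) ≤ γ v - c*v := by
  have hwu : 0 < w - u := by linarith
  have ha : 0 ≤ (w-v)/(w-u) := div_nonneg (by linarith) hwu.le
  have hb : 0 ≤ (v-u)/(w-u) := div_nonneg (by linarith) hwu.le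
  have hab : (w-v)/(w-u) + (v-u)/(w-u) = 1 := by field_simp; ring
  have hpt : ((w-v)/(w-u)) * u + ((v-u)/(w-u)) * w = v := by field_simp; ring
  have hcc := hconc.2 (mem_Ici.mpr hu) (mem_Ici.mpr (by linarith : (0:ℝ) ≤ w)) ha hb hab
  simp only [smul_eq_mul, hpt] at hcc
  have hcv : ((w-v)/(w-u)) * (c*u) + ((v-u)/(w-u)) * (c*w) = c * v := by field_simp; ring
  nlinarith [hcc]

lemma cont_rpow_exp (γ : ℝ → ℝ) (q : ℝ) (hγcont : ContinuousOn γ (Ioi 0))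
    (hpos : ∀ r ∈ Ioi (0:ℝ), 0 < γ r) :
    ContinuousOn (fun r => γ r ^ q * Real.exp (-r)) (Ioi 0) := by
  apply ContinuousOn.mul
  · exact hγcont.rpow_const (fun r hr => Or.inl (hpos r hr).ne')
  · exact (Real.continuous_exp.comp continuous_neg).continuousOn

lemma squeeze_eq (γ : ℝ → ℝ) (c q : ℝ) (hq1 : -1 < q) (hq0 : q ≠ 0) (hcpos : 0 < c)
    (hγcont : ContinuousOn γ (Ioi 0)) (hpos : ∀ r ∈ Ioi (0:ℝ), 0 < γ r)
    (hintq : IntegrableOn (fun r => γ r ^ q * Real.exp (-r)) (Ioi 0))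
    (hIq : (∫ r in Ioi (0:ℝ), γ r ^ q * Real.exp (-r)) = c ^ q * Real.Gamma (1+q))
    (hcmp : (∀ r ∈ Ioi (0:ℝ), γ r ≤ c * r) ∨ (∀ r ∈ Ioi (0:ℝ), c * r ≤ γ r)) :
    ∀ r ∈ Ioi (0:ℝ), γ r = c * r := by
  have hlin_int := integrable_linear_rpow c q hcpos hq1
  obtain ⟨σ, hσ1, hσnn⟩ : ∃ σ : ℝ, (σ = 1 ∨ σ = -1) ∧ ∀ r ∈ Ioi (0:ℝ),
      0 ≤ σ * (γ r ^ q * Real.exp (-r) - (c*r) ^ q * Real.exp (-r)) := by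
    rcases hcmp with hle | hge
    · rcases lt_or_gt_of_ne hq0 with hqn | hqp
      · refine ⟨1, Or.inl rfl, fun r hr => ?_⟩
        have h1 : (c*r) ^ q ≤ γ r ^ q :=
          Real.rpow_le_rpow_of_nonpos (hpos r hr) (hle r hr) hqn.le
        have h2 := Real.exp_pos (-r)
        nlinarith
      · refine ⟨-1, Or.inr rfl, fun r hr => ?_⟩
        have h1 : γ r ^ q ≤ (c*r) ^ q :=
          Real.rpow_le_rpow (hpos r hr).le (hle r hr) hqp.le
        have h2 := Real.exp_pos (-r)
        nlinarith
    · rcases lt_or_gt_of_ne hq0 with hqn | hqp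
      · refine ⟨-1, Or.inr rfl, fun r hr => ?_⟩
        have h1 : γ r ^ q ≤ (c*r) ^ q :=
          Real.rpow_le_rpow_of_nonpos (mul_pos hcpos hr) (hge r hr) hqn.le
        have h2 := Real.exp_pos (-r)
        nlinarith
      · refine ⟨1, Or.inl rfl, fun r hr => ?_⟩
        have h1 : (c*r) ^ q ≤ γ r ^ q :=
          Real.rpow_le_rpow (mul_pos hcpos hr).le (hge r hr) hqp.le
        have h2 := Real.exp_pos (-r)
        nlinarith
  have hσne : σ ≠ 0 := by rcases hσ1 with h | h <;> simp [h]
  have hdint : IntegrableOn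
      (fun r => σ * (γ r ^ q * Real.exp (-r) - (c*r) ^ q * Real.exp (-r))) (Ioi 0) :=
    ((hintq.sub hlin_int).const_mul σ)
  have hdzero : (∫ r in Ioi (0:ℝ),
      σ * (γ r ^ q * Real.exp (-r) - (c*r) ^ q * Real.exp (-r))) = 0 := by
    rw [MeasureTheory.integral_const_mul, integral_sub hintq hlin_int, hIq,
      integral_linear_rpow c q hcpos hq1]
    ring
  have hdcont : ContinuousOn
      (fun r => σ * (γ r ^ q * Real.exp (-r) - (c*r) ^ q * Real.exp (-r))) (Ioi 0) := by
    apply ContinuousOn.mul continuousOn_const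
    apply ContinuousOn.sub (cont_rpow_exp γ q hγcont hpos)
    apply ContinuousOn.mul
    · exact (continuous_const.mul continuous_id).continuousOn.rpow_const
        (fun r hr => Or.inl (mul_pos hcpos hr).ne')
    · exact (Real.continuous_exp.comp continuous_neg).continuousOn
  have hvan := vanish _ hdcont hσnn hdint hdzero
  intro r hr
  have h0 := hvan r hr
  have h1 : γ r ^ q * Real.exp (-r) = (c*r) ^ q * Real.exp (-r) := by
    rcases mul_eq_zero.1 h0 with h | h
    · exact absurd h hσne
    · linarith
  have h2 : γ r ^ q = (c*r) ^ q :=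
    mul_right_cancel₀ (Real.exp_ne_zero _) h1
  exact rpow_inj_pos (hpos r hr) (mul_pos hcpos hr) hq0 h2

lemma Phi_linear (γ : ℝ → ℝ) (c p : ℝ) (hc : 0 ≤ c) (hp : -1 < p) (hp0 : p ≠ 0)
    (hγc : ∀ r ∈ Ioi (0:ℝ), γ r = c * r) :
    ((1 / Real.Gamma (1 + p)) * ∫ r in Ioi (0:ℝ), γ r ^ p * Real.exp (-r)) ^ (1/p) = c := by
  have hGpos : 0 < Real.Gamma (1+p) := Real.Gamma_pos_of_pos (by linarith)
  have hI : (∫ r in Ioi (0:ℝ), γ r ^ p * Real.exp (-r))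
      = ∫ r in Ioi (0:ℝ), (c*r) ^ p * Real.exp (-r) := by
    apply setIntegral_congr_fun measurableSet_Ioi
    intro r hr
    dsimp only
    rw [hγc r hr]
  rcases eq_or_lt_of_le hc with hc0 | hcpos
  · rw [hI]
    have hz : ∀ r ∈ Ioi (0:ℝ), (c*r) ^ p * Real.exp (-r) = 0 := by
      intro r hr
      rw [← hc0, zero_mul, Real.zero_rpow hp0, zero_mul]
    have : (∫ r in Ioi (0:ℝ), (c*r) ^ p * Real.exp (-r)) = 0 := by
      rw [setIntegral_congr_fun measurableSet_Ioi (g := fun _ => (0:ℝ)) (fun r hr => hz r hr)]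
      simp
    rw [this, mul_zero, Real.zero_rpow (one_div_ne_zero hp0), ← hc0]
  · rw [hI, integral_linear_rpow c p hcpos hp]
    have h3 : (1 / Real.Gamma (1+p)) * (c ^ p * Real.Gamma (1+p)) = c ^ p := by
      field_simp
    rw [h3, ← Real.rpow_mul hcpos.le, mul_one_div_cancel hp0, Real.rpow_one]

theorem berwald_one_dim_equality_case (γ : ℝ → ℝ)
    (hnn : ∀ r ∈ Ici (0:ℝ), 0 ≤ γ r)
    (hmono : MonotoneOn γ (Ici 0))
    (hconc : ConcaveOn ℝ (Ici 0) γ)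
    (hint : ∀ p : ℝ, -1 < p → IntegrableOn (fun r => γ r ^ p * Real.exp (-r)) (Ioi 0))
    (p₁ p₂ : ℝ) (hp₁ : -1 < p₁) (hlt : p₁ < p₂) (hp₁0 : p₁ ≠ 0) (hp₂0 : p₂ ≠ 0)
    (heq : ((1 / Real.Gamma (1 + p₁)) * ∫ r in Ioi (0:ℝ), γ r ^ p₁ * Real.exp (-r)) ^ (1/p₁) =
           ((1 / Real.Gamma (1 + p₂)) * ∫ r in Ioi (0:ℝ), γ r ^ p₂ * Real.exp (-r)) ^ (1/p₂)) :
    (∃ c : ℝ, 0 ≤ c ∧ ∀ r ∈ Ici (0:ℝ), γ r = c * r) ∧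
    (∀ p q : ℝ, -1 < p → p ≠ 0 → -1 < q → q ≠ 0 →
      ((1 / Real.Gamma (1 + p)) * ∫ r in Ioi (0:ℝ), γ r ^ p * Real.exp (-r)) ^ (1/p) =
      ((1 / Real.Gamma (1 + q)) * ∫ r in Ioi (0:ℝ), γ r ^ q * Real.exp (-r)) ^ (1/q)) := by
  suffices hlin : ∃ c : ℝ, 0 ≤ c ∧ ∀ r ∈ Ioi (0:ℝ), γ r = c * r by
    obtain ⟨c, hc, hγc⟩ := hlin
    have hγ0 : γ 0 = 0 := by
      have hub : ∀ ε : ℝ, 0 < ε → γ 0 ≤ c * ε := by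
        intro ε hε
        calc γ 0 ≤ γ ε := hmono (mem_Ici.mpr le_rfl) (mem_Ici.mpr hε.le) hε.le
        _ = c * ε := hγc ε hε
      by_contra hne
      have h0pos : 0 < γ 0 := lt_of_le_of_ne (hnn 0 (mem_Ici.mpr le_rfl)) (Ne.symm hne)
      have hεpos : 0 < γ 0 / (2*(c+1)) := by positivity
      have h4 := hub _ hεpos
      have h2 : c * (γ 0/(2*(c+1))) = (c/(2*(c+1))) * γ 0 := by ring
      have h3 : c/(2*(c+1)) < 1 := by
        rw [div_lt_one (by linarith)]
        linarith
      nlinarith [mul_lt_mul_of_pos_right h3 h0pos]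
    have hall : ∀ r ∈ Ici (0:ℝ), γ r = c * r := by
      intro r hr
      rcases eq_or_lt_of_le (mem_Ici.mp hr) with h | h
      · rw [← h, hγ0, mul_zero]
      · exact hγc r h
    refine ⟨⟨c, hc, hall⟩, ?_⟩
    intro p q hp hp0 hq hq0
    rw [Phi_linear γ c p hc hp hp0 hγc, Phi_linear γ c q hc hq hq0 hγc]
  by_cases hzero : ∀ r ∈ Ioi (0:ℝ), γ r = 0
  · exact ⟨0, le_rfl, fun r hr => by rw [hzero r hr, zero_mul]⟩
  push_neg at hzero
  obtain ⟨s, hs, hγs⟩ := hzero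
  have hγspos : 0 < γ s := lt_of_le_of_ne (hnn s (mem_Ici.mpr hs.le)) (Ne.symm hγs)
  have hpos : ∀ r ∈ Ioi (0:ℝ), 0 < γ r := by
    intro r hr
    simp only [mem_Ioi] at hr hs
    rcases le_or_gt s r with h | h
    · exact lt_of_lt_of_le hγspos (hmono (mem_Ici.mpr hs.le) (mem_Ici.mpr (hs.le.trans h)) h)
    · have hcc := conc_comb γ hconc 0 (le_refl 0) hr.le h.le hs
      simp only [zero_mul, sub_zero] at hcc
      have h1 : 0 ≤ (s-r)/s * γ 0 :=
        mul_nonneg (div_nonneg (by linarith) (by linarith)) (hnn 0 (mem_Ici.mpr le_rfl))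
      have h2 : 0 < r/s * γ s := by
        apply mul_pos _ hγspos
        apply div_pos (by linarith) (by linarith)
      linarith
  have hp₂1 : (-1:ℝ) < p₂ := by linarith
  have hint₂ := hint p₂ hp₂1
  have hint₁ := hint p₁ hp₁
  have hG₂ : 0 < Real.Gamma (1+p₂) := Real.Gamma_pos_of_pos (by linarith)
  have hG₁ : 0 < Real.Gamma (1+p₁) := Real.Gamma_pos_of_pos (by linarith)
  have hI₂pos : 0 < ∫ r in Ioi (0:ℝ), γ r ^ p₂ * Real.exp (-r) := by
    apply integral_pos_of_pos _ _ hint₂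
    intro r hr
    exact mul_pos (Real.rpow_pos_of_pos (hpos r hr) _) (Real.exp_pos _)
  have hI₁pos : 0 < ∫ r in Ioi (0:ℝ), γ r ^ p₁ * Real.exp (-r) := by
    apply integral_pos_of_pos _ _ hint₁
    intro r hr
    exact mul_pos (Real.rpow_pos_of_pos (hpos r hr) _) (Real.exp_pos _)
  set c := ((1 / Real.Gamma (1 + p₂)) * ∫ r in Ioi (0:ℝ), γ r ^ p₂ * Real.exp (-r)) ^ (1/p₂)
    with hcdef
  have hA₂pos : 0 < (1 / Real.Gamma (1 + p₂)) * ∫ r in Ioi (0:ℝ), γ r ^ p₂ * Real.exp (-r) :=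
    mul_pos (by positivity) hI₂pos
  have hA₁pos : 0 < (1 / Real.Gamma (1 + p₁)) * ∫ r in Ioi (0:ℝ), γ r ^ p₁ * Real.exp (-r) :=
    mul_pos (by positivity) hI₁pos
  have hcpos : 0 < c := Real.rpow_pos_of_pos hA₂pos _
  have hcq : (∫ r in Ioi (0:ℝ), γ r ^ p₂ * Real.exp (-r)) = c ^ p₂ * Real.Gamma (1+p₂) := by
    have h1 : c ^ p₂ = (1 / Real.Gamma (1 + p₂)) * ∫ r in Ioi (0:ℝ), γ r ^ p₂ * Real.exp (-r) := by
      rw [hcdef, ← Real.rpow_mul hA₂pos.le, one_div_mul_cancel hp₂0, Real.rpow_one]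
    rw [h1]
    field_simp
  have hcp : (∫ r in Ioi (0:ℝ), γ r ^ p₁ * Real.exp (-r)) = c ^ p₁ * Real.Gamma (1+p₁) := by
    have h1 : c ^ p₁ = (1 / Real.Gamma (1 + p₁)) * ∫ r in Ioi (0:ℝ), γ r ^ p₁ * Real.exp (-r) := by
      rw [← heq, ← Real.rpow_mul hA₁pos.le, one_div_mul_cancel hp₁0, Real.rpow_one]
    rw [h1]
    field_simp
  have hγcont : ContinuousOn γ (Ioi 0) := by
    have h := hconc.continuousOn_interior
    rwa [interior_Ici] at h
  refine ⟨c, hcpos.le, ?_⟩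
  by_cases hcase1 : ∀ r ∈ Ioi (0:ℝ), γ r ≤ c * r
  · exact squeeze_eq γ c p₂ hp₂1 hp₂0 hcpos hγcont hpos hint₂ hcq (Or.inl hcase1)
  by_cases hcase2 : ∀ r ∈ Ioi (0:ℝ), c * r ≤ γ r
  · exact squeeze_eq γ c p₂ hp₂1 hp₂0 hcpos hγcont hpos hint₂ hcq (Or.inr hcase2)
  -- genuine crossing case
  push_neg at hcase1 hcase2
  obtain ⟨b, hb, hbgt⟩ := hcase1
  obtain ⟨a, ha, halt⟩ := hcase2
  simp only [mem_Ioi] at hb ha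
  -- b < a
  have hba : b < a := by
    by_contra hab
    push_neg at hab  -- a ≤ b
    rcases eq_or_lt_of_le hab with h | h
    · rw [h] at halt; linarith
    · have hcc := conc_comb γ hconc c (le_refl 0) ha.le h.le hb
      have h1 : 0 ≤ ((b-a)/(b-0)) * (γ 0 - c*0) := by
        apply mul_nonneg (div_nonneg (by linarith) (by linarith))
        have := hnn 0 (mem_Ici.mpr le_rfl)
        linarith
      have h2 : 0 < ((a-0)/(b-0)) * (γ b - c*b) := by
        apply mul_pos (div_pos (by linarith) (by linarith))
        linarith
      linarith
  set S : Set ℝ := {r : ℝ | r ∈ Icc 0 a ∧ c * r ≤ γ r} with hSdef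
  have hbS : b ∈ S := ⟨⟨hb.le, hba.le⟩, hbgt.le⟩
  have hSne : S.Nonempty := ⟨b, hbS⟩
  have hSbdd : BddAbove S := ⟨a, fun x hx => hx.1.2⟩
  set r₀ := sSup S with hr₀def
  have hbr₀ : b ≤ r₀ := le_csSup hSbdd hbS
  have hr₀a : r₀ ≤ a := csSup_le hSne (fun x hx => hx.1.2)
  have hr₀pos : 0 < r₀ := lt_of_lt_of_le hb hbr₀
  have hleft : ∀ r, 0 < r → r < r₀ → c * r ≤ γ r := by
    intro r h0 hrr₀
    obtain ⟨t, htS, hrt⟩ := exists_lt_of_lt_csSup hSne hrr₀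
    have htpos : 0 < t := h0.trans hrt
    have hcc := conc_comb γ hconc c (le_refl 0) h0.le hrt.le htpos
    have h1 : 0 ≤ ((t-r)/(t-0)) * (γ 0 - c*0) := by
      apply mul_nonneg (div_nonneg (by linarith) (by linarith))
      have := hnn 0 (mem_Ici.mpr le_rfl)
      linarith
    have h2 : 0 ≤ ((r-0)/(t-0)) * (γ t - c*t) := by
      apply mul_nonneg (div_nonneg (by linarith) (by linarith))
      have := htS.2
      linarith
    linarith
  have hright : ∀ r, r₀ < r → γ r ≤ c * r := by
    intro r hr
    have hrpos : 0 < r := hr₀pos.trans hr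
    rcases le_or_gt r a with hra | har
    · by_contra hcon
      push_neg at hcon
      have hrS : r ∈ S := ⟨⟨hrpos.le, hra⟩, hcon.le⟩
      exact absurd (le_csSup hSbdd hrS) (not_le.mpr hr)
    · by_contra hcon
      push_neg at hcon
      have hcc := conc_comb γ hconc c hb.le hba.le har.le (hba.trans har)
      have h1 : 0 < ((r-a)/(r-b)) * (γ b - c*b) := by
        apply mul_pos (div_pos (by linarith) (by linarith))
        linarith
      have h2 : 0 < ((a-b)/(r-b)) * (γ r - c*r) := by
        apply mul_pos (div_pos (by linarith) (by linarith))
        linarith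
      linarith
  have hcont_at : ContinuousAt γ r₀ := hγcont.continuousAt (isOpen_Ioi.mem_nhds hr₀pos)
  have htend : Tendsto (fun r => γ r - c * r) (𝓝 r₀) (𝓝 (γ r₀ - c * r₀)) :=
    hcont_at.tendsto.sub ((continuous_const.mul continuous_id).continuousAt.tendsto)
  have hγr₀ : γ r₀ = c * r₀ := by
    have hge : c * r₀ ≤ γ r₀ := by
      have htl : Tendsto (fun r => γ r - c * r) (𝓝[<] r₀) (𝓝 (γ r₀ - c * r₀)) :=
        htend.mono_left nhdsWithin_le_nhds
      have hev : ∀ᶠ r in 𝓝[<] r₀, 0 ≤ γ r - c * r := by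
        filter_upwards [self_mem_nhdsWithin,
          eventually_nhdsWithin_of_eventually_nhds (isOpen_Ioi.eventually_mem hr₀pos)]
          with r h1 h2
        have := hleft r h2 h1
        linarith
      have := ge_of_tendsto htl hev
      linarith
    have hle : γ r₀ ≤ c * r₀ := by
      have htl : Tendsto (fun r => γ r - c * r) (𝓝[>] r₀) (𝓝 (γ r₀ - c * r₀)) :=
        htend.mono_left nhdsWithin_le_nhds
      have hev : ∀ᶠ r in 𝓝[>] r₀, γ r - c * r ≤ 0 := by
        filter_upwards [self_mem_nhdsWithin] with r h1
        have := hright r h1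
        linarith
      have := le_of_tendsto htl hev
      linarith
    linarith
  have ht₀pos : 0 < c * r₀ := mul_pos hcpos hr₀pos
  have hcfg : ∀ r ∈ Ioi (0:ℝ),
      ((c*r ≤ γ r ∧ γ r ≤ c*r₀) ∨ (c*r₀ ≤ γ r ∧ γ r ≤ c*r)) := by
    intro r hr
    simp only [mem_Ioi] at hr
    rcases le_or_gt r r₀ with h | h
    · left
      constructor
      · rcases eq_or_lt_of_le h with h' | h'
        · rw [h', hγr₀]
        · exact hleft r hr h'
      · rw [← hγr₀]
        exact hmono (mem_Ici.mpr hr.le) (mem_Ici.mpr hr₀pos.le) h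
    · right
      constructor
      · rw [← hγr₀]
        exact hmono (mem_Ici.mpr hr₀pos.le) (mem_Ici.mpr (hr₀pos.trans h).le) h.le
      · exact hright r h
  -- the key nonnegative function
  set K : ℝ := (1/p₂) * (c*r₀) ^ (p₁ - p₂) with hKdef
  set G : ℝ → ℝ := fun r =>
    ((1/p₁) * (γ r ^ p₁ - (c*r) ^ p₁) - K * (γ r ^ p₂ - (c*r) ^ p₂)) * Real.exp (-r)
    with hGdef
  have hGnonneg : ∀ r ∈ Ioi (0:ℝ), 0 ≤ G r := by
    intro r hr
    have hkey := key_le p₁ p₂ (c*r₀) (γ r) (c*r) hp₁0 hp₂0 hlt ht₀pos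
      (hpos r hr) (mul_pos hcpos (mem_Ioi.mp hr)) (hcfg r hr)
    rw [hGdef]
    dsimp only
    apply mul_nonneg _ (Real.exp_pos _).le
    rw [hKdef]
    exact sub_nonneg.mpr hkey
  have hGcont : ContinuousOn G (Ioi 0) := by
    rw [hGdef]
    apply ContinuousOn.mul _ (Real.continuous_exp.comp continuous_neg).continuousOn
    apply ContinuousOn.sub
    · apply ContinuousOn.mul continuousOn_const
      apply ContinuousOn.sub
      · exact hγcont.rpow_const (fun r hr => Or.inl (hpos r hr).ne')
      · exact (continuous_const.mul continuous_id).continuousOn.rpow_const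
          (fun r hr => Or.inl (mul_pos hcpos (mem_Ioi.mp hr)).ne')
    · apply ContinuousOn.mul continuousOn_const
      apply ContinuousOn.sub
      · exact hγcont.rpow_const (fun r hr => Or.inl (hpos r hr).ne')
      · exact (continuous_const.mul continuous_id).continuousOn.rpow_const
          (fun r hr => Or.inl (mul_pos hcpos (mem_Ioi.mp hr)).ne')
  have hlin₁ := integrable_linear_rpow c p₁ hcpos hp₁
  have hlin₂ := integrable_linear_rpow c p₂ hcpos hp₂1
  have hA : IntegrableOn
      (fun r => (1/p₁) * (γ r ^ p₁ * Real.exp (-r) - (c*r) ^ p₁ * Real.exp (-r))) (Ioi 0) :=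
    (hint₁.sub hlin₁).const_mul (1/p₁)
  have hB : IntegrableOn
      (fun r => K * (γ r ^ p₂ * Real.exp (-r) - (c*r) ^ p₂ * Real.exp (-r))) (Ioi 0) :=
    (hint₂.sub hlin₂).const_mul K
  have hGeq : EqOn (fun r => (1/p₁) * (γ r ^ p₁ * Real.exp (-r) - (c*r) ^ p₁ * Real.exp (-r))
      - K * (γ r ^ p₂ * Real.exp (-r) - (c*r) ^ p₂ * Real.exp (-r))) G (Ioi 0) := by
    intro r _
    rw [hGdef]
    dsimp only
    ring
  have hAB : IntegrableOn (fun r => (1/p₁) * (γ r ^ p₁ * Real.exp (-r) - (c*r) ^ p₁ * Real.exp (-r))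
      - K * (γ r ^ p₂ * Real.exp (-r) - (c*r) ^ p₂ * Real.exp (-r))) (Ioi 0) := hA.sub hB
  have hGint : IntegrableOn G (Ioi 0) := hAB.congr_fun hGeq measurableSet_Ioi
  have hGzero : (∫ r in Ioi (0:ℝ), G r) = 0 := by
    rw [← setIntegral_congr_fun measurableSet_Ioi hGeq]
    rw [integral_sub hA hB, MeasureTheory.integral_const_mul, MeasureTheory.integral_const_mul,
      integral_sub hint₁ hlin₁, integral_sub hint₂ hlin₂, hcp, hcq,
      integral_linear_rpow c p₁ hcpos hp₁, integral_linear_rpow c p₂ hcpos hp₂1]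
    ring
  have hvanG := vanish G hGcont hGnonneg hGint hGzero
  intro r hr
  by_contra hne
  have hstrict := key_lt p₁ p₂ (c*r₀) (γ r) (c*r) hp₁0 hp₂0 hlt ht₀pos
    (hpos r hr) (mul_pos hcpos (mem_Ioi.mp hr)) (hcfg r hr) hne
  have hGr := hvanG r hr
  rw [hGdef] at hGr
  dsimp only at hGr
  have hepos := Real.exp_pos (-r)
  have hinner : 0 < (1/p₁) * (γ r ^ p₁ - (c*r) ^ p₁) - K * (γ r ^ p₂ - (c*r) ^ p₂) := by
    rw [hKdef]
    exact sub_pos.mpr hstrict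
  rcases mul_eq_zero.1 hGr with h | h
  · linarith
  · exact absurd h (Real.exp_ne_zero _)
end

section
/- Let γ : [0,∞) → [0,∞) be a non-decreasing concave function with γ(r) > 0 for r > 0. Then lim_{p→0⁺} ( (1/Γ(1+p)) ∫₀^∞ γ(r)^p e^{-r} dr )^{1/p} = e^{A} · exp( ∫₀^∞ log γ(r) e^{-r} dr ), where A is the Euler–Mascheroni constant. -/
open Real MeasureTheory Set Filter

lemma aux_pow_mono {x p q : ℝ} (hx : 0 < x) (hp : 0 < p) (hpq : p ≤ q) :
    (x ^ p - 1) / p ≤ (x ^ q - 1) / q := by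
  have hq : 0 < q := hp.trans_le hpq
  set t := p / q with ht_def
  have ht0 : 0 ≤ t := by positivity
  have ht1 : t ≤ 1 := (div_le_one hq).2 hpq
  have key : x ^ p ≤ 1 + t * (x ^ q - 1) := by
    have h := Real.geom_mean_le_arith_mean2_weighted (by linarith : (0:ℝ) ≤ 1 - t) ht0
      (zero_le_one) (Real.rpow_nonneg hx.le q) (by ring)
    rw [Real.one_rpow, one_mul] at h
    have : (x ^ q) ^ t = x ^ p := by
      rw [← Real.rpow_mul hx.le, mul_div_cancel₀ _ hq.ne']
    linarith [h, this ▸ h]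
  have : (x ^ p - 1) ≤ (p / q) * (x ^ q - 1) := by rw [← ht_def]; linarith
  rw [div_le_div_iff₀ hp hq]
  calc (x ^ p - 1) * q ≤ ((p / q) * (x ^ q - 1)) * q := by nlinarith
    _ = (x ^ q - 1) * p := by field_simp

lemma aux_log_le {x p : ℝ} (hx : 0 < x) (hp : 0 < p) :
    Real.log x ≤ (x ^ p - 1) / p := by
  rw [le_div_iff₀ hp]
  have h1 : Real.log (x ^ p) ≤ x ^ p - 1 := Real.log_le_sub_one_of_pos (Real.rpow_pos_of_pos hx p)
  rw [Real.log_rpow hx] at h1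
  linarith

lemma aux_slope_tendsto {x : ℝ} (hx : 0 < x) :
    Tendsto (fun p : ℝ => (x ^ p - 1) / p) (nhdsWithin 0 (Ioi 0)) (nhds (Real.log x)) := by
  have hd : HasDerivAt (fun p : ℝ => x ^ p) (Real.log x) 0 := by
    have h1 : HasDerivAt (fun p : ℝ => Real.exp (Real.log x * p))
        (Real.exp (Real.log x * 0) * Real.log x) 0 :=
      (Real.hasDerivAt_exp _).comp 0 (by simpa using (hasDerivAt_id (0:ℝ)).const_mul (Real.log x))
    simp only [mul_zero, Real.exp_zero, one_mul] at h1
    refine h1.congr_of_eventuallyEq ?_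
    filter_upwards with p
    rw [Real.rpow_def_of_pos hx]
  have h2 : Tendsto (slope (fun p : ℝ => x ^ p) 0) (nhdsWithin 0 (Ioi 0)) (nhds (Real.log x)) :=
    (hasDerivAt_iff_tendsto_slope.mp hd).mono_left (nhdsWithin_mono _ (fun y hy => ne_of_gt hy))
  refine h2.congr' ?_
  filter_upwards [self_mem_nhdsWithin] with p hp
  simp [slope_def_field, Real.rpow_zero]

theorem berwald_one_dim_limit_at_zero (γ : ℝ → ℝ)
    (hnn : ∀ r ∈ Ici (0:ℝ), 0 ≤ γ r)
    (hpos : ∀ r : ℝ, 0 < r → 0 < γ r)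
    (hmono : MonotoneOn γ (Ici 0))
    (hconc : ConcaveOn ℝ (Ici 0) γ)
    (hint : ∀ p : ℝ, -1 < p → IntegrableOn (fun r => γ r ^ p * Real.exp (-r)) (Ioi 0))
    (hlog : IntegrableOn (fun r => |Real.log (γ r)| * Real.exp (-r)) (Ioi 0)) :
    Tendsto (fun p : ℝ =>
        ((1 / Real.Gamma (1 + p)) * ∫ r in Ioi (0:ℝ), γ r ^ p * Real.exp (-r)) ^ (1/p))
      (nhdsWithin 0 (Ioi 0))
      (nhds (Real.exp Real.eulerMascheroniConstant *
        Real.exp (∫ r in Ioi (0:ℝ), Real.log (γ r) * Real.exp (-r)))) := by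
  set F : ℝ → ℝ := fun p => ∫ r in Ioi (0:ℝ), γ r ^ p * Real.exp (-r) with hF_def
  set L : ℝ := ∫ r in Ioi (0:ℝ), Real.log (γ r) * Real.exp (-r) with hL_def
  have hγae : AEMeasurable γ (volume.restrict (Ioi (0:ℝ))) :=
    (aemeasurable_restrict_of_monotoneOn measurableSet_Ici hmono).mono_measure
      (Measure.restrict_mono (Ioi_subset_Ici le_rfl) le_rfl)
  have hposae : ∀ᵐ r ∂(volume.restrict (Ioi (0:ℝ))), 0 < γ r := by
    filter_upwards [ae_restrict_mem measurableSet_Ioi] with r hr using hpos r hr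
  -- integrability of exp(-r)
  have hexp : IntegrableOn (fun r => Real.exp (-r)) (Ioi (0:ℝ)) := by
    have := hint 0 (by norm_num)
    refine this.congr_fun (fun r _ => by simp [Real.rpow_zero]) measurableSet_Ioi
  have hexp_int : (∫ r in Ioi (0:ℝ), Real.exp (-r)) = 1 := integral_exp_neg_Ioi_zero
  -- Step: limit of the difference quotient of F
  have hH : Tendsto (fun p => (F p - 1) / p) (nhdsWithin 0 (Ioi 0)) (nhds L) := by
    have hdom : Tendsto (fun p => ∫ r in Ioi (0:ℝ), (γ r ^ p - 1) / p * Real.exp (-r))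
        (nhdsWithin 0 (Ioi 0)) (nhds L) := by
      apply tendsto_integral_filter_of_dominated_convergence
        (fun r => (|Real.log (γ r)| + 2 * γ r ^ ((1:ℝ)/2) + 2) * Real.exp (-r))
      · filter_upwards with p
        exact ((((hγae.pow aemeasurable_const).sub aemeasurable_const).div_const p).mul
          (Real.measurable_exp.comp measurable_neg).aemeasurable).aestronglyMeasurable
      · filter_upwards [Ioo_mem_nhdsGT_of_mem
          (show (0:ℝ) ∈ Ico (0:ℝ) ((1:ℝ)/2) from ⟨le_refl _, by norm_num⟩)] with p hp
        filter_upwards [ae_restrict_mem measurableSet_Ioi] with r hr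
        have hx : 0 < γ r := hpos r hr
        have hp0 : 0 < p := hp.1
        have h1 : Real.log (γ r) ≤ (γ r ^ p - 1) / p := aux_log_le hx hp0
        have h2 : (γ r ^ p - 1) / p ≤ (γ r ^ ((1:ℝ)/2) - 1) / ((1:ℝ)/2) :=
          aux_pow_mono hx hp0 (le_of_lt hp.2)
        have habs : |(γ r ^ p - 1) / p| ≤ |Real.log (γ r)| + 2 * γ r ^ ((1:ℝ)/2) + 2 := by
          rw [abs_le]
          constructor
          · have := neg_abs_le (Real.log (γ r))
            have h3 : (0:ℝ) ≤ γ r ^ ((1:ℝ)/2) := Real.rpow_nonneg hx.le _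
            linarith
          · have h3 : (γ r ^ ((1:ℝ)/2) - 1) / ((1:ℝ)/2) = 2 * γ r ^ ((1:ℝ)/2) - 2 := by ring
            have h4 : (0:ℝ) ≤ |Real.log (γ r)| := abs_nonneg _
            linarith
        rw [norm_mul, Real.norm_eq_abs, Real.norm_eq_abs, abs_of_pos (Real.exp_pos _)]
        exact mul_le_mul_of_nonneg_right habs (Real.exp_pos _).le
      · refine (((hlog.add ((hint ((1:ℝ)/2) (by norm_num)).const_mul 2)).add
          (hexp.const_mul 2)).congr ?_)
        filter_upwards with r
        simp only [Pi.add_apply]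
        ring
      · filter_upwards [ae_restrict_mem measurableSet_Ioi] with r hr
        exact (aux_slope_tendsto (hpos r hr)).mul_const _
    refine hdom.congr' ?_
    filter_upwards [self_mem_nhdsWithin] with p (hp : 0 < p)
    have heq : (fun r => (γ r ^ p - 1) / p * Real.exp (-r)) =
        fun r => p⁻¹ • (γ r ^ p * Real.exp (-r) - Real.exp (-r)) := by
      funext r
      rw [smul_eq_mul, div_eq_inv_mul]
      ring
    rw [heq, integral_smul, integral_sub (hint p (by linarith)) hexp, hexp_int]
    rw [smul_eq_mul]
    field_simp
    rfl
  -- F tends to 1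
  have hF1 : Tendsto F (nhdsWithin 0 (Ioi 0)) (nhds 1) := by
    have h0 : Tendsto (fun p : ℝ => p) (nhdsWithin 0 (Ioi 0)) (nhds 0) :=
      tendsto_id.mono_left nhdsWithin_le_nhds
    have := h0.mul hH
    rw [zero_mul] at this
    have h2 : Tendsto (fun p => 1 + p * ((F p - 1) / p)) (nhdsWithin 0 (Ioi 0)) (nhds 1) := by
      simpa using (tendsto_const_nhds.add this)
    refine h2.congr' ?_
    filter_upwards [self_mem_nhdsWithin] with p (hp : 0 < p)
    field_simp
    ring
  -- auxiliary function g
  set g : ℝ → ℝ := fun y => if y = 1 then 1 else Real.log y / (y - 1) with hg_def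
  have hg : Tendsto g (nhds 1) (nhds 1) := by
    have hd : HasDerivAt Real.log 1 1 := by simpa using Real.hasDerivAt_log one_ne_zero
    have h1 : Tendsto (slope Real.log 1) (nhdsWithin 1 {(1:ℝ)}ᶜ) (nhds 1) :=
      hasDerivAt_iff_tendsto_slope.mp hd
    have h2 : Tendsto g (nhdsWithin 1 {(1:ℝ)}ᶜ) (nhds 1) := by
      refine h1.congr' ?_
      filter_upwards [self_mem_nhdsWithin] with y (hy : y ≠ 1)
      simp [hg_def, slope_def_field, hy, Real.log_one]
    have h3 : Tendsto g (pure (1:ℝ)) (nhds 1) := by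
      have : g 1 = 1 := by simp [hg_def]
      rw [tendsto_pure_left]
      intro s hs
      rw [this]
      exact mem_of_mem_nhds hs
    have h4 := h2.sup h3
    rwa [nhdsNE_sup_pure] at h4
  -- limit of log F p / p
  have hlogF : Tendsto (fun p => Real.log (F p) / p) (nhdsWithin 0 (Ioi 0)) (nhds L) := by
    have := (hg.comp hF1).mul hH
    rw [one_mul] at this
    refine this.congr' ?_
    filter_upwards [self_mem_nhdsWithin] with p (hp : 0 < p)
    by_cases h : F p = 1
    · simp [Function.comp, h, hg_def, Real.log_one]
    · have : g (F p) = Real.log (F p) / (F p - 1) := by simp [hg_def, h]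
      simp only [Function.comp_apply, this]
      rw [div_mul_div_comm]
      rw [div_eq_div_iff (by exact mul_ne_zero (sub_ne_zero.mpr h) hp.ne') hp.ne']
      ring
  -- limit of log Gamma (1+p) / p
  have hΓ : Tendsto (fun p => Real.log (Real.Gamma (1 + p)) / p) (nhdsWithin 0 (Ioi 0))
      (nhds (-Real.eulerMascheroniConstant)) := by
    have hc : HasDerivAt (fun p : ℝ => Real.Gamma (1 + p)) (-Real.eulerMascheroniConstant) 0 := by
      have hG : HasDerivAt Real.Gamma (-Real.eulerMascheroniConstant) ((1:ℝ) + 0) := by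
        rw [add_zero]; exact Real.hasDerivAt_Gamma_one
      have := hG.comp 0
        ((by simpa using ((hasDerivAt_id (0:ℝ)).const_add 1)) : HasDerivAt (fun p : ℝ => 1 + p) 1 0)
      rw [mul_one] at this; exact this
    have hl : HasDerivAt (fun p : ℝ => Real.log (Real.Gamma (1 + p)))
        (-Real.eulerMascheroniConstant) 0 := by
      have := hc.log (by simp [Real.Gamma_one])
      simpa [Real.Gamma_one] using this
    have h1 := (hasDerivAt_iff_tendsto_slope.mp hl).mono_left
      (nhdsWithin_mono _ (fun y hy => ne_of_gt hy))
    refine h1.congr' ?_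
    filter_upwards [self_mem_nhdsWithin] with p (hp : 0 < p)
    simp [slope_def_field, Real.Gamma_one, Real.log_one]
  -- combine
  have hcomb : Tendsto (fun p => Real.log (F p) / p - Real.log (Real.Gamma (1 + p)) / p)
      (nhdsWithin 0 (Ioi 0)) (nhds (L + Real.eulerMascheroniConstant)) := by
    simpa [sub_neg_eq_add] using hlogF.sub hΓ
  have hfinal := (Real.continuous_exp.tendsto _).comp hcomb
  rw [show Real.exp (L + Real.eulerMascheroniConstant)
      = Real.exp Real.eulerMascheroniConstant * Real.exp L by rw [← Real.exp_add]; ring_nf]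
      at hfinal
  refine hfinal.congr' ?_
  filter_upwards [self_mem_nhdsWithin] with p (hp : 0 < p)
  have hΓpos : 0 < Real.Gamma (1 + p) := Real.Gamma_pos_of_pos (by linarith)
  have hFpos : 0 < F p := by
    rw [hF_def]
    rw [setIntegral_pos_iff_support_of_nonneg_ae ?_ (hint p (by linarith))]
    · have hsub : Ioi (0:ℝ) ⊆ Function.support (fun r => γ r ^ p * Real.exp (-r)) ∩ Ioi 0 := by
        intro r hr
        exact ⟨(mul_pos (Real.rpow_pos_of_pos (hpos r hr) p) (Real.exp_pos _)).ne', hr⟩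
      calc (0:ENNReal) < volume (Ioi (0:ℝ)) := by
              rw [Real.volume_Ioi]; exact ENNReal.zero_lt_top
        _ ≤ _ := measure_mono hsub
    · filter_upwards [ae_restrict_mem measurableSet_Ioi] with r hr
      exact (mul_pos (Real.rpow_pos_of_pos (hpos r hr) p) (Real.exp_pos _)).le
  have hmul_pos : 0 < (1 / Real.Gamma (1 + p)) * F p := by positivity
  show Real.exp (Real.log (F p) / p - Real.log (Real.Gamma (1 + p)) / p)
      = ((1 / Real.Gamma (1 + p)) * F p) ^ (1/p)
  rw [Real.rpow_def_of_pos hmul_pos, Real.log_mul (by positivity) hFpos.ne',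
    Real.log_div one_ne_zero hΓpos.ne', Real.log_one]
  congr 1
  ring
end

section
/- Let g : ℝⁿ → [0,∞) be integrable and log-concave with g(0) > 0. Then the Lebesgue measure of Ball's body K̃_n(g) = { x : ∫₀^∞ g(rx) r^{n-1} dr ≥ g(0)/n } satisfies |K̃_n(g)| = (1/g(0)) ∫_{ℝⁿ} g(x) dx. -/
open Real MeasureTheory Set Metric

noncomputable section

namespace BallBodyAux

open scoped ENNReal

variable {n : ℕ}

local notation "E" => EuclideanSpace ℝ (Fin n)

lemma nontrivE (hn : 0 < n) : Nontrivial (EuclideanSpace ℝ (Fin n)) :=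
  Module.nontrivial_of_finrank_pos (R := ℝ)
    (by rw [finrank_euclideanSpace_fin]; exact hn)

lemma mp (hn : 0 < n) :
    MeasurePreserving (homeomorphUnitSphereProd (EuclideanSpace ℝ (Fin n)))
      ((volume : Measure E).comap Subtype.val)
      ((volume : Measure E).toSphere.prod (Measure.volumeIoiPow (n - 1))) := by
  have h := (volume : Measure E).measurePreserving_homeomorphUnitSphereProd
  rwa [finrank_euclideanSpace_fin] at h

lemma coe_smul_fst (x : ({0}ᶜ : Set (EuclideanSpace ℝ (Fin n)))) :
    (((homeomorphUnitSphereProd (EuclideanSpace ℝ (Fin n)) x).2 : ℝ) •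
      ((homeomorphUnitSphereProd (EuclideanSpace ℝ (Fin n)) x).1 : EuclideanSpace ℝ (Fin n)))
      = (x : EuclideanSpace ℝ (Fin n)) := by
  rw [← homeomorphUnitSphereProd_symm_apply_coe, Homeomorph.symm_apply_apply]

lemma polar_lintegral (hn : 0 < n) (h : EuclideanSpace ℝ (Fin n) → ℝ≥0∞) (hm : Measurable h) :
    ∫⁻ x, h x = ∫⁻ u, (∫⁻ r, h ((r : ℝ) • (u : E)) ∂(Measure.volumeIoiPow (n - 1)))
      ∂(volume : Measure E).toSphere := by
  haveI := nontrivE hn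
  have hG : Measurable fun p : sphere (0:E) 1 × Ioi (0:ℝ) => h ((p.2 : ℝ) • (p.1 : E)) :=
    hm.comp ((continuous_subtype_val.comp continuous_snd).smul
      (continuous_subtype_val.comp continuous_fst)).measurable
  calc ∫⁻ x, h x ∂(volume : Measure E)
      = ∫⁻ x in ({0}ᶜ : Set E), h x := by
        rw [restrict_compl_singleton]
    _ = ∫⁻ x : ({0}ᶜ : Set E), h x ∂((volume : Measure E).comap Subtype.val) :=
        (lintegral_subtype_comap (measurableSet_singleton 0).compl _).symm
    _ = ∫⁻ x : ({0}ᶜ : Set E),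
          (fun p : sphere (0:E) 1 × Ioi (0:ℝ) => h ((p.2 : ℝ) • (p.1 : E)))
            (homeomorphUnitSphereProd (EuclideanSpace ℝ (Fin n)) x)
          ∂((volume : Measure E).comap Subtype.val) := by
        refine lintegral_congr fun x => ?_
        simp only [coe_smul_fst]
    _ = ∫⁻ p, h ((p.2 : ℝ) • (p.1 : E))
          ∂((volume : Measure E).toSphere.prod (Measure.volumeIoiPow (n - 1))) :=
        (mp hn).lintegral_comp hG
    _ = _ := lintegral_prod _ hG.aemeasurable

lemma lintegral_volumeIoiPow (f : ℝ → ℝ≥0∞) (hf : Measurable f) :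
    (∫⁻ r, f (r : ℝ) ∂(Measure.volumeIoiPow (n - 1)))
      = ∫⁻ r in Ioi (0:ℝ), ENNReal.ofReal (r ^ (n - 1)) * f r := by
  rw [Measure.volumeIoiPow, lintegral_withDensity_eq_lintegral_mul _
    ((measurable_subtype_coe.pow_const _).ennreal_ofReal)
    (show Measurable (fun r : Ioi (0:ℝ) => f ↑r) from hf.comp measurable_subtype_coe)]
  exact lintegral_subtype_comap measurableSet_Ioi
    (fun a : ℝ => ENNReal.ofReal (a ^ (n - 1)) * f a)

lemma volumeIoiPow_Iic (hn : 0 < n) {R : ℝ} (hR : 0 ≤ R) :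
    Measure.volumeIoiPow (n - 1) {r : Ioi (0:ℝ) | (r : ℝ) ≤ R}
      = ENNReal.ofReal (R ^ n / n) := by
  have h1 : {r : Ioi (0:ℝ) | (r : ℝ) ≤ R}
      = (Subtype.val : Ioi (0:ℝ) → ℝ) ⁻¹' (Iic R) := rfl
  have hind : ∀ r : Ioi (0:ℝ), (1 : Ioi (0:ℝ) → ℝ≥0∞) r
      = (Iic R).indicator 1 (r : ℝ) → True := fun _ _ => trivial
  have key : Measure.volumeIoiPow (n - 1) {r : Ioi (0:ℝ) | (r : ℝ) ≤ R}
      = ∫⁻ r, (Iic R).indicator 1 (r : ℝ) ∂(Measure.volumeIoiPow (n - 1)) := by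
    rw [h1, ← lintegral_indicator_one (measurable_subtype_coe measurableSet_Iic)]
    refine lintegral_congr fun r => ?_
    by_cases hr : (r : ℝ) ∈ Iic R <;>
      simp [Set.indicator, hr, Set.mem_preimage]
  rw [key, lintegral_volumeIoiPow _ (measurable_one.indicator measurableSet_Iic)]
  have h2 : ∀ r : ℝ, ENNReal.ofReal (r ^ (n - 1)) * (Iic R).indicator 1 r
      = (Iic R).indicator (fun r => ENNReal.ofReal (r ^ (n - 1))) r := by
    intro r
    by_cases hr : r ∈ Iic R <;> simp [Set.indicator, hr]
  simp only [h2]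
  rw [lintegral_indicator measurableSet_Iic, Measure.restrict_restrict measurableSet_Iic]
  have h3 : Iic R ∩ Ioi (0:ℝ) = Ioc 0 R := by
    ext a; simp [mem_Ioc, and_comm]
  rw [h3]
  have hInt : IntegrableOn (fun a : ℝ => a ^ (n - 1)) (Ioc 0 R) volume :=
    (continuous_pow _).integrableOn_Ioc
  rw [← ofReal_integral_eq_lintegral_ofReal hInt
    ((ae_restrict_iff' measurableSet_Ioc).2 (ae_of_all _ fun a ha => pow_nonneg ha.1.le _))]
  congr 1
  rw [← intervalIntegral.integral_of_le hR, integral_pow]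
  have e1 : n - 1 + 1 = n := Nat.succ_pred_eq_of_pos hn
  rw [e1]
  have e2 : ((n - 1 : ℕ) : ℝ) + 1 = (n : ℝ) := by
    rw [Nat.cast_pred hn]; ring
  rw [e2, zero_pow hn.ne', sub_zero]

lemma F_smul (hn : 0 < n) (g : EuclideanSpace ℝ (Fin n) → ℝ) (x : EuclideanSpace ℝ (Fin n))
    {t : ℝ} (ht : 0 < t) :
    (∫ r in Ioi (0:ℝ), g (r • t • x) * r ^ (n - 1)) =
      t⁻¹ ^ n * ∫ r in Ioi (0:ℝ), g (r • x) * r ^ (n - 1) := by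
  have h1 : EqOn (fun r : ℝ => g (r • t • x) * r ^ (n - 1))
      (fun r : ℝ => t⁻¹ ^ (n - 1) * ((fun s : ℝ => g (s • x) * s ^ (n - 1)) (t * r)))
      (Ioi (0:ℝ)) := by
    intro r hr
    have hx : r • t • x = (t * r) • x := by rw [smul_smul, mul_comm]
    simp only [hx, mul_pow]
    have ht' : t⁻¹ ^ (n - 1) * t ^ (n - 1) = 1 := by
      rw [← mul_pow, inv_mul_cancel₀ ht.ne', one_pow]
    calc g ((t * r) • x) * r ^ (n - 1)
        = (t⁻¹ ^ (n - 1) * t ^ (n - 1)) * (g ((t * r) • x) * r ^ (n - 1)) := by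
          rw [ht', one_mul]
      _ = t⁻¹ ^ (n - 1) * (g ((t * r) • x) * (t ^ (n - 1) * r ^ (n - 1))) := by ring
  rw [setIntegral_congr_fun measurableSet_Ioi h1, integral_const_mul]
  have h2 := integral_comp_mul_left_Ioi (fun s : ℝ => g (s • x) * s ^ (n - 1)) 0 ht
  rw [mul_zero] at h2
  have e1 : n - 1 + 1 = n := by omega
  rw [h2, smul_eq_mul, ← mul_assoc, ← pow_succ, e1]

lemma mem_iff (hn : 0 < n) (g : EuclideanSpace ℝ (Fin n) → ℝ) (hg0 : 0 < g 0)
    (x : EuclideanSpace ℝ (Fin n)) {t : ℝ} (ht : 0 < t) :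
    (g 0 / n ≤ ∫ r in Ioi (0:ℝ), g (r • t • x) * r ^ (n - 1)) ↔
      t ^ n ≤ (∫ r in Ioi (0:ℝ), g (r • x) * r ^ (n - 1)) * n / g 0 := by
  have hnR : (0:ℝ) < n := Nat.cast_pos.2 hn
  rw [F_smul hn g x ht, inv_pow, ← div_eq_inv_mul, le_div_iff₀ (pow_pos ht n),
    div_mul_eq_mul_div, div_le_iff₀ hnR, le_div_iff₀ hg0, mul_comm (g 0) (t ^ n)]

lemma fiber_measure (hn : 0 < n) (g : EuclideanSpace ℝ (Fin n) → ℝ)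
    (hg_nn : ∀ x, 0 ≤ g x) (hg0 : 0 < g 0) (u : EuclideanSpace ℝ (Fin n)) :
    Measure.volumeIoiPow (n - 1)
        {r : Ioi (0:ℝ) | (r : ℝ) • u ∈ {x : EuclideanSpace ℝ (Fin n) |
          g 0 / n ≤ ∫ s in Ioi (0:ℝ), g (s • x) * s ^ (n - 1)}}
      = ENNReal.ofReal ((∫ s in Ioi (0:ℝ), g (s • u) * s ^ (n - 1)) / g 0) := by
  have hnR : (0:ℝ) < n := Nat.cast_pos.2 hn
  set F := ∫ s in Ioi (0:ℝ), g (s • u) * s ^ (n - 1) with hF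
  have hFnn : 0 ≤ F := setIntegral_nonneg measurableSet_Ioi
    fun s hs => mul_nonneg (hg_nn _) (pow_nonneg (le_of_lt hs) _)
  set c := F * n / g 0 with hc
  have hcnn : 0 ≤ c := div_nonneg (mul_nonneg hFnn hnR.le) hg0.le
  set R := c ^ ((n:ℝ)⁻¹) with hRdef
  have hRnn : 0 ≤ R := rpow_nonneg hcnn _
  have hRn : R ^ n = c := by
    rw [hRdef, ← rpow_natCast (c ^ ((n:ℝ)⁻¹)) n, ← rpow_mul hcnn,
      inv_mul_cancel₀ (Nat.cast_ne_zero.2 hn.ne'), rpow_one]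
  have hset : {r : Ioi (0:ℝ) | (r : ℝ) • u ∈ {x : EuclideanSpace ℝ (Fin n) |
        g 0 / n ≤ ∫ s in Ioi (0:ℝ), g (s • x) * s ^ (n - 1)}}
      = {r : Ioi (0:ℝ) | (r : ℝ) ≤ R} := by
    ext r
    have hr : (0:ℝ) < (r : ℝ) := r.2
    simp only [mem_setOf_eq]
    rw [mem_iff hn g hg0 u hr, ← hF, ← hc, ← hRn,
      pow_le_pow_iff_left₀ hr.le hRnn hn.ne']
  rw [hset, volumeIoiPow_Iic hn hRnn, hRn]
  congr 1
  rw [hc]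
  field_simp

lemma main (hn : 0 < n) (g : EuclideanSpace ℝ (Fin n) → ℝ) (hgm : Measurable g)
    (hg_nn : ∀ x, 0 ≤ g x) (hg_int : Integrable g) (hg0 : 0 < g 0) :
    volume {x : EuclideanSpace ℝ (Fin n) |
        g 0 / n ≤ ∫ r in Ioi (0:ℝ), g (r • x) * r ^ (n - 1)}
      = ENNReal.ofReal ((∫ x, g x) / g 0) := by
  haveI := nontrivE hn
  have hsm : StronglyMeasurable
      (fun p : (EuclideanSpace ℝ (Fin n)) × ℝ => g (p.2 • p.1) * p.2 ^ (n - 1)) := by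
    apply Measurable.stronglyMeasurable
    exact (hgm.comp ((continuous_snd.smul continuous_fst).measurable)).mul
      (measurable_snd.pow_const _)
  have hFm : Measurable fun x : EuclideanSpace ℝ (Fin n) =>
      ∫ r in Ioi (0:ℝ), g (r • x) * r ^ (n - 1) := by
    have h := hsm.integral_prod_right' (ν := volume.restrict (Ioi (0:ℝ)))
    exact h.measurable
  have hKmeas : MeasurableSet {x : EuclideanSpace ℝ (Fin n) |
      g 0 / n ≤ ∫ r in Ioi (0:ℝ), g (r • x) * r ^ (n - 1)} :=
    measurableSet_le measurable_const hFm
  have hL' : ∀ u : EuclideanSpace ℝ (Fin n),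
      (∫⁻ r : Ioi (0:ℝ), ENNReal.ofReal (g ((r : ℝ) • u)) ∂(Measure.volumeIoiPow (n - 1)))
        = ∫⁻ r in Ioi (0:ℝ), ENNReal.ofReal (g (r • u) * r ^ (n - 1)) := by
    intro u
    rw [lintegral_volumeIoiPow (fun a : ℝ => ENNReal.ofReal (g (a • u)))
      ((hgm.comp ((continuous_id.smul continuous_const).measurable)).ennreal_ofReal)]
    refine setLIntegral_congr_fun measurableSet_Ioi (fun r hr => ?_)
    rw [ENNReal.ofReal_mul (hg_nn _)]
    exact mul_comm _ _
  have htot : (∫⁻ u, (∫⁻ r : Ioi (0:ℝ),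
        ENNReal.ofReal (g ((r : ℝ) • (u : EuclideanSpace ℝ (Fin n))))
        ∂(Measure.volumeIoiPow (n - 1))) ∂(volume : Measure (EuclideanSpace ℝ (Fin n))).toSphere)
      = ENNReal.ofReal (∫ x, g x) := by
    rw [← polar_lintegral hn _ (hgm.ennreal_ofReal),
      ← ofReal_integral_eq_lintegral_ofReal hg_int (ae_of_all _ hg_nn)]
  have hmeasL : Measurable fun u : sphere (0:(EuclideanSpace ℝ (Fin n))) 1 =>
      ∫⁻ r : Ioi (0:ℝ), ENNReal.ofReal (g ((r : ℝ) • (u : EuclideanSpace ℝ (Fin n))))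
        ∂(Measure.volumeIoiPow (n - 1)) := by
    apply Measurable.lintegral_prod_right
    exact (hgm.comp ((continuous_subtype_val.comp continuous_snd).smul
      (continuous_subtype_val.comp continuous_fst)).measurable).ennreal_ofReal
  have hFL : ∀ᵐ u : sphere (0:(EuclideanSpace ℝ (Fin n))) 1
      ∂(volume : Measure (EuclideanSpace ℝ (Fin n))).toSphere,
      ENNReal.ofReal (∫ r in Ioi (0:ℝ), g (r • (u : EuclideanSpace ℝ (Fin n))) * r ^ (n - 1))
        = ∫⁻ r : Ioi (0:ℝ), ENNReal.ofReal (g ((r : ℝ) • (u : EuclideanSpace ℝ (Fin n))))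
          ∂(Measure.volumeIoiPow (n - 1)) := by
    filter_upwards [ae_lt_top hmeasL (htot ▸ ENNReal.ofReal_ne_top)] with u hu
    rw [hL' ((u : EuclideanSpace ℝ (Fin n)))] at hu ⊢
    have hnn : 0 ≤ᵐ[volume.restrict (Ioi (0:ℝ))]
        fun r : ℝ => g (r • (u : EuclideanSpace ℝ (Fin n))) * r ^ (n - 1) :=
      (ae_restrict_iff' measurableSet_Ioi).2 (ae_of_all _ fun r hr =>
        mul_nonneg (hg_nn _) (pow_nonneg (le_of_lt hr) _))
    have hint : Integrable
        (fun r : ℝ => g (r • (u : EuclideanSpace ℝ (Fin n))) * r ^ (n - 1))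
        (volume.restrict (Ioi (0:ℝ))) := by
      refine ⟨((hgm.comp ((continuous_id.smul continuous_const).measurable)).mul
        (measurable_id.pow_const _)).aestronglyMeasurable, ?_⟩
      rw [hasFiniteIntegral_iff_ofReal hnn]
      exact hu
    exact ofReal_integral_eq_lintegral_ofReal hint hnn
  have h0 : volume {x : EuclideanSpace ℝ (Fin n) |
        g 0 / n ≤ ∫ r in Ioi (0:ℝ), g (r • x) * r ^ (n - 1)}
      = Measure.comap Subtype.val volume
        (Subtype.val ⁻¹' {x : EuclideanSpace ℝ (Fin n) |
          g 0 / n ≤ ∫ r in Ioi (0:ℝ), g (r • x) * r ^ (n - 1)}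
          : Set ({0}ᶜ : Set (EuclideanSpace ℝ (Fin n)))) := by
    rw [comap_subtype_coe_apply (measurableSet_singleton 0).compl volume _,
      Subtype.image_preimage_coe, inter_comm, ← diff_eq]
    exact (measure_diff_null (measure_singleton _)).symm
  have hA : MeasurableSet {p : sphere (0:(EuclideanSpace ℝ (Fin n))) 1 × Ioi (0:ℝ) |
      ((p.2 : ℝ) • (p.1 : EuclideanSpace ℝ (Fin n))) ∈ {x : EuclideanSpace ℝ (Fin n) |
        g 0 / n ≤ ∫ r in Ioi (0:ℝ), g (r • x) * r ^ (n - 1)}} :=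
    (((continuous_subtype_val.comp continuous_snd).smul
      (continuous_subtype_val.comp continuous_fst)).measurable) hKmeas
  have h1 : (Subtype.val ⁻¹' {x : EuclideanSpace ℝ (Fin n) |
        g 0 / n ≤ ∫ r in Ioi (0:ℝ), g (r • x) * r ^ (n - 1)}
        : Set ({0}ᶜ : Set (EuclideanSpace ℝ (Fin n))))
      = (homeomorphUnitSphereProd (EuclideanSpace ℝ (Fin n))) ⁻¹'
        {p : sphere (0:(EuclideanSpace ℝ (Fin n))) 1 × Ioi (0:ℝ) |
          ((p.2 : ℝ) • (p.1 : EuclideanSpace ℝ (Fin n))) ∈ {x : EuclideanSpace ℝ (Fin n) |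
            g 0 / n ≤ ∫ r in Ioi (0:ℝ), g (r • x) * r ^ (n - 1)}} := by
    ext x
    simp only [mem_preimage, mem_setOf_eq, coe_smul_fst]
  have h2 : volume {x : EuclideanSpace ℝ (Fin n) |
        g 0 / n ≤ ∫ r in Ioi (0:ℝ), g (r • x) * r ^ (n - 1)}
      = ((volume : Measure (EuclideanSpace ℝ (Fin n))).toSphere.prod
          (Measure.volumeIoiPow (n - 1)))
        {p : sphere (0:(EuclideanSpace ℝ (Fin n))) 1 × Ioi (0:ℝ) |
          ((p.2 : ℝ) • (p.1 : EuclideanSpace ℝ (Fin n))) ∈ {x : EuclideanSpace ℝ (Fin n) |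
            g 0 / n ≤ ∫ r in Ioi (0:ℝ), g (r • x) * r ^ (n - 1)}} := by
    rw [h0, h1]
    exact (mp hn).measure_preimage_emb (Homeomorph.measurableEmbedding _) _
  rw [h2, Measure.prod_apply hA]
  calc ∫⁻ u, Measure.volumeIoiPow (n - 1) (Prod.mk u ⁻¹'
        {p : sphere (0:(EuclideanSpace ℝ (Fin n))) 1 × Ioi (0:ℝ) |
          ((p.2 : ℝ) • (p.1 : EuclideanSpace ℝ (Fin n))) ∈ {x : EuclideanSpace ℝ (Fin n) |
            g 0 / n ≤ ∫ r in Ioi (0:ℝ), g (r • x) * r ^ (n - 1)}})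
        ∂(volume : Measure (EuclideanSpace ℝ (Fin n))).toSphere
      = ∫⁻ u, ENNReal.ofReal ((∫ s in Ioi (0:ℝ),
          g (s • (u : EuclideanSpace ℝ (Fin n))) * s ^ (n - 1)) / g 0)
          ∂(volume : Measure (EuclideanSpace ℝ (Fin n))).toSphere :=
        lintegral_congr fun u => fiber_measure hn g hg_nn hg0 (u : EuclideanSpace ℝ (Fin n))
    _ = ∫⁻ u, (∫⁻ r : Ioi (0:ℝ),
          ENNReal.ofReal (g ((r : ℝ) • (u : EuclideanSpace ℝ (Fin n))))
          ∂(Measure.volumeIoiPow (n - 1))) / ENNReal.ofReal (g 0)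
          ∂(volume : Measure (EuclideanSpace ℝ (Fin n))).toSphere := by
        refine lintegral_congr_ae ?_
        filter_upwards [hFL] with u hu
        rw [ENNReal.ofReal_div_of_pos hg0, hu]
    _ = (∫⁻ u, (∫⁻ r : Ioi (0:ℝ),
          ENNReal.ofReal (g ((r : ℝ) • (u : EuclideanSpace ℝ (Fin n))))
          ∂(Measure.volumeIoiPow (n - 1)))
          ∂(volume : Measure (EuclideanSpace ℝ (Fin n))).toSphere) / ENNReal.ofReal (g 0) := by
        simp_rw [div_eq_mul_inv]
        exact lintegral_mul_const' _ _
          (ENNReal.inv_ne_top.2 (ENNReal.ofReal_pos.2 hg0).ne')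
    _ = ENNReal.ofReal (∫ x, g x) / ENNReal.ofReal (g 0) := by rw [htot]
    _ = ENNReal.ofReal ((∫ x, g x) / g 0) := (ENNReal.ofReal_div_of_pos hg0).symm

lemma cone_null (hn : 0 < n) {S : Set (sphere (0:(EuclideanSpace ℝ (Fin n))) 1)}
    (hS : MeasurableSet S) (hS0 : (volume : Measure (EuclideanSpace ℝ (Fin n))).toSphere S = 0) :
    volume (Subtype.val '' ((homeomorphUnitSphereProd (EuclideanSpace ℝ (Fin n))) ⁻¹'
      (S ×ˢ (univ : Set (Ioi (0:ℝ)))))) = 0 := by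
  haveI := nontrivE hn
  rw [← comap_subtype_coe_apply (measurableSet_singleton 0).compl volume]
  rw [(mp hn).measure_preimage_emb (Homeomorph.measurableEmbedding _)]
  rw [Measure.prod_prod, hS0, zero_mul]

lemma ae_fiber_null (hn : 0 < n) {N : Set (EuclideanSpace ℝ (Fin n))}
    (hNm : MeasurableSet N) (hN0 : volume N = 0) :
    ∀ᵐ u : sphere (0:(EuclideanSpace ℝ (Fin n))) 1
      ∂(volume : Measure (EuclideanSpace ℝ (Fin n))).toSphere,
      volume {r : ℝ | r ∈ Ioi (0:ℝ) ∧ r • (u : EuclideanSpace ℝ (Fin n)) ∈ N} = 0 := by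
  have h := polar_lintegral hn (N.indicator 1) (measurable_one.indicator hNm)
  rw [lintegral_indicator_one hNm, hN0] at h
  have hmeas : Measurable fun u : sphere (0:(EuclideanSpace ℝ (Fin n))) 1 =>
      ∫⁻ r : Ioi (0:ℝ), N.indicator 1 ((r : ℝ) • (u : EuclideanSpace ℝ (Fin n)))
        ∂(Measure.volumeIoiPow (n - 1)) := by
    apply Measurable.lintegral_prod_right
    exact (measurable_one.indicator hNm).comp
      ((continuous_subtype_val.comp continuous_snd).smul
        (continuous_subtype_val.comp continuous_fst)).measurable
  have h2 : ∀ᵐ u : sphere (0:(EuclideanSpace ℝ (Fin n))) 1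
      ∂(volume : Measure (EuclideanSpace ℝ (Fin n))).toSphere,
      (∫⁻ r : Ioi (0:ℝ), N.indicator 1 ((r : ℝ) • (u : EuclideanSpace ℝ (Fin n)))
        ∂(Measure.volumeIoiPow (n - 1))) = 0 :=
    (lintegral_eq_zero_iff hmeas).1 h.symm
  filter_upwards [h2] with u hu
  rw [lintegral_volumeIoiPow
    (fun a : ℝ => N.indicator 1 (a • (u : EuclideanSpace ℝ (Fin n))))
    ((measurable_one.indicator hNm).comp
      ((continuous_id.smul continuous_const).measurable))] at hu
  have h3 := (lintegral_eq_zero_iff ((measurable_id.pow_const (n-1)).ennreal_ofReal.mul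
    ((measurable_one.indicator hNm).comp
      ((continuous_id.smul continuous_const).measurable)))).1 hu
  have h3' : ∀ᵐ (a : ℝ) ∂(volume.restrict (Ioi (0:ℝ))),
      ENNReal.ofReal (a ^ (n - 1)) * N.indicator 1 (a • (u : EuclideanSpace ℝ (Fin n))) = 0 := h3
  rw [ae_restrict_iff' measurableSet_Ioi, ae_iff] at h3'
  refine measure_mono_null ?_ h3'
  intro r hr
  obtain ⟨hr1, hr2⟩ := hr
  simp only [mem_setOf_eq, Classical.not_imp]
  refine ⟨hr1, ?_⟩
  have hpos : (0:ℝ) < r ^ (n - 1) := pow_pos hr1 _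
  simp only [Pi.zero_apply, Set.indicator_of_mem hr2, Pi.one_apply, mul_one]
  exact (ENNReal.ofReal_pos.2 hpos).ne'

end BallBodyAux

end

open Real MeasureTheory Set

theorem ball_body_volume (n : ℕ) (hn : 0 < n)
    (g : EuclideanSpace ℝ (Fin n) → ℝ)
    (hg_nn : ∀ x, 0 ≤ g x)
    (hg_int : Integrable g)
    (hg_lc : ∀ x y : EuclideanSpace ℝ (Fin n), ∀ l : ℝ, 0 < l → l < 1 →
      g x ^ l * g y ^ (1 - l) ≤ g (l • x + (1 - l) • y))
    (hg0 : 0 < g 0)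
    (Kn : Set (EuclideanSpace ℝ (Fin n)))
    (hKn : Kn = {x | g 0 / n ≤ ∫ r in Ioi (0:ℝ), g (r • x) * r ^ ((n : ℝ) - 1)}) :
    (volume Kn).toReal = (1 / g 0) * ∫ x, g x := by
  classical
  haveI := BallBodyAux.nontrivE hn
  have hcast : ((n:ℝ) - 1) = ((n - 1 : ℕ) : ℝ) := by rw [Nat.cast_pred hn]
  have hpow : ∀ x : EuclideanSpace ℝ (Fin n),
      (∫ r in Ioi (0:ℝ), g (r • x) * r ^ ((n:ℝ) - 1))
        = ∫ r in Ioi (0:ℝ), g (r • x) * r ^ (n - 1) := by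
    intro x
    refine integral_congr_ae (ae_of_all _ fun r => ?_)
    show g (r • x) * r ^ ((n:ℝ) - 1) = g (r • x) * r ^ (n - 1)
    rw [hcast, Real.rpow_natCast]
  have hKn' : Kn = {x : EuclideanSpace ℝ (Fin n) |
      g 0 / n ≤ ∫ r in Ioi (0:ℝ), g (r • x) * r ^ (n - 1)} := by
    rw [hKn]
    exact Set.ext fun x => by simp only [mem_setOf_eq]; rw [hpow x]
  set m : EuclideanSpace ℝ (Fin n) → ℝ := hg_int.1.mk g with hm
  set g2 : EuclideanSpace ℝ (Fin n) → ℝ :=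
    fun x => if x = 0 then g 0 else max (m x) 0 with hg2
  have hg2m : Measurable g2 := by
    refine Measurable.ite measurableSet_eq measurable_const ?_
    exact hg_int.1.stronglyMeasurable_mk.measurable.max measurable_const
  have hg20 : g2 0 = g 0 := if_pos rfl
  have hg2nn : ∀ x, 0 ≤ g2 x := by
    intro x
    by_cases hx : x = 0 <;> simp [hg2, hx, hg0.le, le_max_right]
  have hae : g2 =ᵐ[volume] g := by
    have h1 : ∀ᵐ x : EuclideanSpace ℝ (Fin n) ∂volume, x ≠ 0 := by
      rw [ae_iff]
      simp only [not_not, Set.setOf_eq_eq_singleton]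
      exact measure_singleton _
    filter_upwards [hg_int.1.ae_eq_mk, h1] with x hx hx0
    rw [hg2]
    simp only [if_neg hx0]
    rw [hm, ← hx]
    exact max_eq_left (hg_nn x)
  have hg2int : Integrable g2 := hg_int.congr hae.symm
  have hg2intgr : ∫ x, g2 x = ∫ x, g x := integral_congr_ae hae
  have hN0 : volume {y : EuclideanSpace ℝ (Fin n) | g y ≠ g2 y} = 0 := ae_iff.mp hae.symm
  obtain ⟨N', hNsub, hN'm, hN'0⟩ := exists_measurable_superset_of_null hN0
  have h_ae := BallBodyAux.ae_fiber_null hn hN'm hN'0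
  rw [ae_iff] at h_ae
  obtain ⟨S, hSsub, hSm, hS0⟩ := exists_measurable_superset_of_null h_ae
  have hC0 := BallBodyAux.cone_null hn hSm hS0
  set C := Subtype.val '' ((homeomorphUnitSphereProd (EuclideanSpace ℝ (Fin n))) ⁻¹'
    (S ×ˢ (univ : Set (Ioi (0:ℝ))))) with hC
  have hkey : ∀ x : EuclideanSpace ℝ (Fin n), x ≠ 0 → x ∉ C →
      (∫ r in Ioi (0:ℝ), g (r • x) * r ^ (n - 1))
        = ∫ r in Ioi (0:ℝ), g2 (r • x) * r ^ (n - 1) := by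
    intro x hx0 hxC
    set y : ({0}ᶜ : Set (EuclideanSpace ℝ (Fin n))) := ⟨x, hx0⟩ with hy
    set p := homeomorphUnitSphereProd (EuclideanSpace ℝ (Fin n)) y with hp
    have hxtu : ((p.2 : ℝ) • (p.1 : EuclideanSpace ℝ (Fin n))) = x :=
      BallBodyAux.coe_smul_fst y
    have hu : p.1 ∉ S := by
      intro hmem
      exact hxC ⟨y, Set.mem_preimage.2 (Set.mem_prod.2 ⟨hmem, mem_univ _⟩), rfl⟩
    have hgood : volume {r : ℝ | r ∈ Ioi (0:ℝ) ∧
        r • (p.1 : EuclideanSpace ℝ (Fin n)) ∈ N'} = 0 := by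
      by_contra hcon
      exact hu (hSsub hcon)
    have htpos : (0:ℝ) < (p.2 : ℝ) := p.2.2
    have hmeasSet : MeasurableSet {r : ℝ | r ∈ Ioi (0:ℝ) ∧
        r • (p.1 : EuclideanSpace ℝ (Fin n)) ∈ N'} :=
      measurableSet_Ioi.inter (((continuous_id.smul continuous_const).measurable) hN'm)
    have hnull2 : volume ((fun r : ℝ => (p.2 : ℝ) * r) ⁻¹'
        {r : ℝ | r ∈ Ioi (0:ℝ) ∧ r • (p.1 : EuclideanSpace ℝ (Fin n)) ∈ N'}) = 0 := by
      rw [← Measure.map_apply (measurable_const_mul ((p.2 : ℝ))) hmeasSet,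
        Real.map_volume_mul_left htpos.ne', Measure.smul_apply, hgood, smul_zero]
    refine integral_congr_ae ((ae_restrict_iff' measurableSet_Ioi).2 ?_)
    rw [ae_iff]
    refine measure_mono_null ?_ hnull2
    intro r hr
    simp only [mem_setOf_eq, Classical.not_imp] at hr
    obtain ⟨hr1, hr2⟩ := hr
    have hrx : ((p.2 : ℝ) * r) • (p.1 : EuclideanSpace ℝ (Fin n)) = r • x := by
      rw [← hxtu, smul_smul, mul_comm]
    refine Set.mem_preimage.2 ⟨mul_pos htpos hr1, ?_⟩
    rw [hrx]
    refine hNsub ?_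
    intro heq
    exact hr2 (by rw [heq])
  have hK2 := BallBodyAux.main hn g2 hg2m hg2nn hg2int (by rw [hg20]; exact hg0)
  have hZ : volume (({0} : Set (EuclideanSpace ℝ (Fin n))) ∪ C) = 0 :=
    measure_union_null (measure_singleton _) hC0
  have hsub1 : Kn ⊆ {x : EuclideanSpace ℝ (Fin n) |
      g2 0 / n ≤ ∫ r in Ioi (0:ℝ), g2 (r • x) * r ^ (n - 1)}
      ∪ (({0} : Set (EuclideanSpace ℝ (Fin n))) ∪ C) := by
    intro x hx
    by_cases hx0 : x = 0
    · exact Or.inr (Or.inl (by simp [hx0]))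
    by_cases hxC : x ∈ C
    · exact Or.inr (Or.inr hxC)
    left
    rw [hKn'] at hx
    show g2 0 / n ≤ _
    rw [hg20, ← hkey x hx0 hxC]
    exact hx
  have hsub2 : {x : EuclideanSpace ℝ (Fin n) |
      g2 0 / n ≤ ∫ r in Ioi (0:ℝ), g2 (r • x) * r ^ (n - 1)}
      ⊆ Kn ∪ (({0} : Set (EuclideanSpace ℝ (Fin n))) ∪ C) := by
    intro x hx
    by_cases hx0 : x = 0
    · exact Or.inr (Or.inl (by simp [hx0]))
    by_cases hxC : x ∈ C
    · exact Or.inr (Or.inr hxC)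
    left
    rw [hKn']
    have hx' : g2 0 / n ≤ ∫ r in Ioi (0:ℝ), g2 (r • x) * r ^ (n - 1) := hx
    show g 0 / n ≤ _
    rw [← hg20, hkey x hx0 hxC]
    exact hx'
  have hvol : volume Kn = volume {x : EuclideanSpace ℝ (Fin n) |
      g2 0 / n ≤ ∫ r in Ioi (0:ℝ), g2 (r • x) * r ^ (n - 1)} := by
    apply le_antisymm
    · calc volume Kn ≤ volume ({x : EuclideanSpace ℝ (Fin n) |
            g2 0 / n ≤ ∫ r in Ioi (0:ℝ), g2 (r • x) * r ^ (n - 1)}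
            ∪ (({0} : Set (EuclideanSpace ℝ (Fin n))) ∪ C)) := measure_mono hsub1
        _ ≤ volume {x : EuclideanSpace ℝ (Fin n) |
            g2 0 / n ≤ ∫ r in Ioi (0:ℝ), g2 (r • x) * r ^ (n - 1)}
            + volume (({0} : Set (EuclideanSpace ℝ (Fin n))) ∪ C) := measure_union_le _ _
        _ = _ := by rw [hZ, add_zero]
    · calc volume {x : EuclideanSpace ℝ (Fin n) |
            g2 0 / n ≤ ∫ r in Ioi (0:ℝ), g2 (r • x) * r ^ (n - 1)}
          ≤ volume (Kn ∪ (({0} : Set (EuclideanSpace ℝ (Fin n))) ∪ C)) := measure_mono hsub2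
        _ ≤ volume Kn + volume (({0} : Set (EuclideanSpace ℝ (Fin n))) ∪ C) :=
            measure_union_le _ _
        _ = volume Kn := by rw [hZ, add_zero]
  rw [hvol, hK2, hg20, hg2intgr, ENNReal.toReal_ofReal (div_nonneg (integral_nonneg hg_nn) hg0.le),
    div_eq_mul_inv, one_div, mul_comm]
end

section
/- Let g : ℝⁿ → [0,∞) be integrable and log-concave with ‖g‖_∞ = g(0) > 0. Then for 0 < p ≤ q, (Γ(1+p)^{1/p} / Γ(1+q)^{1/q}) K̃_q(g) ⊆ K̃_p(g) ⊆ K̃_q(g), where K̃_p(g) is Ball's body with radial function ρ_{K̃_p(g)}(u)^p = (1/g(0)) ∫₀^∞ p r^{p-1} g(ru) dr. -/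
open Real MeasureTheory Set Pointwise

namespace BallAux

variable {h : ℝ → ℝ} {g0 : ℝ}

lemma hmono (hg0 : 0 < g0) (h0 : h 0 = g0) (hnn : ∀ r, 0 ≤ h r) (hub : ∀ r, h r ≤ g0)
    (hlc : ∀ a b l : ℝ, 0 < l → l < 1 → h a ^ l * h b ^ (1 - l) ≤ h (l * a + (1 - l) * b))
    {a b : ℝ} (ha : 0 ≤ a) (hab : a ≤ b) : h b ≤ h a := by
  rcases eq_or_lt_of_le hab with rfl | hab'
  · exact le_refl _
  rcases eq_or_lt_of_le ha with rfl | ha'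
  · rw [h0]; exact hub b
  rcases (hnn b).eq_or_lt with hb0 | hb0
  · rw [← hb0]; exact hnn a
  have hbpos : 0 < b := ha.trans_lt hab'
  have hl0 : 0 < a / b := div_pos ha' hbpos
  have hl1 : a / b < 1 := (div_lt_one hbpos).mpr hab'
  have key := hlc b 0 (a / b) hl0 hl1
  rw [mul_zero, add_zero, div_mul_cancel₀ _ hbpos.ne', h0] at key
  calc h b = h b ^ (a / b) * h b ^ (1 - a / b) := by
        rw [← Real.rpow_add hb0, add_sub_cancel, Real.rpow_one]
    _ ≤ h b ^ (a / b) * g0 ^ (1 - a / b) :=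
        mul_le_mul_of_nonneg_left (Real.rpow_le_rpow (hnn b) (hub b) (by linarith))
          (Real.rpow_nonneg (hnn b) _)
    _ ≤ h a := key

lemma haesm (hg0 : 0 < g0) (h0 : h 0 = g0) (hnn : ∀ r, 0 ≤ h r) (hub : ∀ r, h r ≤ g0)
    (hlc : ∀ a b l : ℝ, 0 < l → l < 1 → h a ^ l * h b ^ (1 - l) ≤ h (l * a + (1 - l) * b))
    (s : ℝ) :
    AEStronglyMeasurable (fun r => h r * r ^ (s - 1)) (volume.restrict (Ioi (0:ℝ))) := by
  have hanti : Antitone (fun r : ℝ => if r ≤ 0 then g0 else h r) := by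
    intro a b hab
    dsimp only
    by_cases h1 : b ≤ 0
    · have h2 : a ≤ 0 := hab.trans h1
      simp [h1, h2]
    · by_cases h2 : a ≤ 0
      · simp only [if_neg h1, if_pos h2]
        exact hub b
      · simp only [if_neg h1, if_neg h2]
        exact hmono hg0 h0 hnn hub hlc (not_le.1 h2).le hab
  have hm : Measurable fun r : ℝ => if r ≤ 0 then g0 else h r := hanti.measurable
  refine AEStronglyMeasurable.congr
    ((hm.mul (measurable_id'.pow_const (s-1))).aestronglyMeasurable) ?_
  filter_upwards [ae_restrict_mem measurableSet_Ioi] with r hr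
  have : ¬ r ≤ 0 := not_le.2 hr
  simp [this]

lemma integrable_weight (hg0 : 0 < g0) (h0 : h 0 = g0) (hnn : ∀ r, 0 ≤ h r)
    (hub : ∀ r, h r ≤ g0)
    (hlc : ∀ a b l : ℝ, 0 < l → l < 1 → h a ^ l * h b ^ (1 - l) ≤ h (l * a + (1 - l) * b))
    {p : ℝ} (hp : 0 < p)
    (hint : IntegrableOn (fun r => h r * r ^ (p - 1)) (Ioi (0:ℝ)))
    {s : ℝ} (hs : 0 < s) :
    IntegrableOn (fun r => h r * r ^ (s - 1)) (Ioi (0:ℝ)) := by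
  have hex : ∃ R, 0 < R ∧ h R < g0 := by
    by_contra hcon
    push_neg at hcon
    have heq : EqOn (fun r => h r * r ^ (p-1)) (fun r : ℝ => g0 * r ^ (p-1)) (Ioi 0) := by
      intro r hr
      have hr' : h r = g0 := le_antisymm (hub r) (hcon r hr)
      simp only [hr']
    have h2 : IntegrableOn (fun r : ℝ => g0 * r ^ (p-1)) (Ioi 0) :=
      hint.congr_fun heq measurableSet_Ioi
    have h3 : IntegrableOn (fun r : ℝ => r ^ (p-1)) (Ioi 1) := by
      have h4 : IntegrableOn (fun r : ℝ => g0⁻¹ * (g0 * r ^ (p-1))) (Ioi 1) :=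
        (h2.mono_set (Ioi_subset_Ioi zero_le_one)).const_mul g0⁻¹
      refine h4.congr_fun (fun r _ => ?_) measurableSet_Ioi
      dsimp only
      rw [inv_mul_cancel_left₀ hg0.ne']
    rw [integrableOn_Ioi_rpow_iff zero_lt_one] at h3
    linarith
  obtain ⟨R, hR, hRlt⟩ := hex
  have hA : IntegrableOn (fun r => h r * r ^ (s - 1)) (Ioc 0 R) := by
    have hbound : IntegrableOn (fun r : ℝ => g0 * r ^ (s - 1)) (Ioc 0 R) := by
      have h5 := (intervalIntegral.intervalIntegrable_rpow' (show (-1:ℝ) < s - 1 by linarith) (a := 0) (b := R))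
      rw [intervalIntegrable_iff_integrableOn_Ioc_of_le hR.le] at h5
      exact h5.const_mul g0
    refine Integrable.mono' hbound
      ((haesm hg0 h0 hnn hub hlc s).mono_measure
        (Measure.restrict_mono Ioc_subset_Ioi_self le_rfl)) ?_
    filter_upwards [ae_restrict_mem measurableSet_Ioc] with r hr
    rw [Real.norm_eq_abs, abs_mul, abs_of_nonneg (hnn r), abs_of_nonneg (Real.rpow_nonneg hr.1.le _)]
    exact mul_le_mul_of_nonneg_right (hub r) (Real.rpow_nonneg hr.1.le _)
  have hB : IntegrableOn (fun r => h r * r ^ (s - 1)) (Ioi R) := by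
    rcases (hnn R).eq_or_lt with hR0 | hR0
    · refine (integrableOn_zero (ε' := ℝ)).congr_fun (fun r hr => ?_) measurableSet_Ioi
      have h1 : h r ≤ h R := hmono hg0 h0 hnn hub hlc hR.le (mem_Ioi.1 hr).le
      have h2 : h r = 0 := by linarith [hnn r]
      simp [h2]
    · set θ := h R / g0 with hθdef
      have hθ0 : 0 < θ := div_pos hR0 hg0
      have hθ1 : θ < 1 := (div_lt_one hg0).mpr hRlt
      set μ := -Real.log θ / R with hμdef
      have hμ : 0 < μ := div_pos (neg_pos.2 (Real.log_neg hθ0 hθ1)) hR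
      have hbd : ∀ r, R < r → h r ≤ g0 * Real.exp (-(μ * r)) := by
        intro r hr
        have hrpos : 0 < r := hR.trans hr
        have hl0 : 0 < R / r := div_pos hR hrpos
        have hl1 : R / r < 1 := (div_lt_one hrpos).mpr hr
        have key := hlc r 0 (R / r) hl0 hl1
        rw [mul_zero, add_zero, div_mul_cancel₀ _ hrpos.ne', h0] at key
        have hstep : h r ^ (R / r) ≤ θ * g0 ^ (R / r) := by
          rw [hθdef, div_mul_eq_mul_div, le_div_iff₀ hg0]
          calc h r ^ (R / r) * g0
              = (h r ^ (R / r) * g0 ^ (1 - R / r)) * g0 ^ (R / r) := by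
                have hsplit : g0 ^ (1 - R / r) * g0 ^ (R / r) = g0 := by
                  rw [← Real.rpow_add hg0]
                  norm_num
                rw [mul_assoc, hsplit]
            _ ≤ h R * g0 ^ (R / r) :=
                mul_le_mul_of_nonneg_right key (Real.rpow_nonneg hg0.le _)
        calc h r = (h r ^ (R / r)) ^ (R / r)⁻¹ := by
              rw [← Real.rpow_mul (hnn r), mul_inv_cancel₀ hl0.ne', Real.rpow_one]
          _ ≤ (θ * g0 ^ (R / r)) ^ (R / r)⁻¹ :=
              Real.rpow_le_rpow (Real.rpow_nonneg (hnn r) _) hstep (inv_pos.2 hl0).le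
          _ = θ ^ (R / r)⁻¹ * g0 := by
              rw [Real.mul_rpow hθ0.le (Real.rpow_nonneg hg0.le _), ← Real.rpow_mul hg0.le,
                mul_inv_cancel₀ hl0.ne', Real.rpow_one]
          _ = g0 * Real.exp (-(μ * r)) := by
              rw [Real.rpow_def_of_pos hθ0, inv_div, mul_comm]
              congr 1
              rw [hμdef]
              field_simp
      have hbint : IntegrableOn (fun r : ℝ => g0 * Real.exp (-(μ * r)) * r ^ (s - 1)) (Ioi R) := by
        have base := integrableOn_rpow_mul_exp_neg_mul_rpow
          (show (-1:ℝ) < s - 1 by linarith) zero_lt_one hμ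
        have base2 : IntegrableOn (fun r : ℝ => g0 * Real.exp (-(μ * r)) * r ^ (s-1)) (Ioi 0) := by
          have h6 : IntegrableOn (fun x : ℝ => g0 * (x ^ (s-1) * Real.exp (-μ * x ^ (1:ℝ)))) (Ioi 0) :=
            base.const_mul g0
          refine h6.congr_fun (fun r _ => ?_) measurableSet_Ioi
          dsimp only
          rw [Real.rpow_one, neg_mul]
          ring
        exact base2.mono_set (Ioi_subset_Ioi hR.le)
      refine Integrable.mono' hbint
        ((haesm hg0 h0 hnn hub hlc s).mono_measure
          (Measure.restrict_mono (Ioi_subset_Ioi hR.le) le_rfl)) ?_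
      filter_upwards [ae_restrict_mem measurableSet_Ioi] with r hr
      have hrpos : (0:ℝ) < r := hR.trans hr
      rw [Real.norm_eq_abs, abs_mul, abs_of_nonneg (hnn r), abs_of_nonneg (Real.rpow_nonneg hrpos.le _)]
      exact mul_le_mul_of_nonneg_right (hbd r hr) (Real.rpow_nonneg hrpos.le _)
  have hU := hA.union hB
  rwa [Ioc_union_Ioi_eq_Ioi hR.le] at hU

lemma integrable_Ioc (hg0 : 0 < g0) (h0 : h 0 = g0) (hnn : ∀ r, 0 ≤ h r)
    (hub : ∀ r, h r ≤ g0)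
    (hlc : ∀ a b l : ℝ, 0 < l → l < 1 → h a ^ l * h b ^ (1 - l) ≤ h (l * a + (1 - l) * b))
    {s R : ℝ} (hs : 0 < s) (hR : 0 < R) :
    IntegrableOn (fun r => h r * r ^ (s - 1)) (Ioc (0:ℝ) R) := by
  have hbound : IntegrableOn (fun r : ℝ => g0 * r ^ (s - 1)) (Ioc 0 R) := by
    have h5 := (intervalIntegral.intervalIntegrable_rpow'
      (show (-1:ℝ) < s - 1 by linarith) (a := 0) (b := R))
    rw [intervalIntegrable_iff_integrableOn_Ioc_of_le hR.le] at h5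
    exact h5.const_mul g0
  refine Integrable.mono' hbound
    ((haesm hg0 h0 hnn hub hlc s).mono_measure
      (Measure.restrict_mono Ioc_subset_Ioi_self le_rfl)) ?_
  filter_upwards [ae_restrict_mem measurableSet_Ioc] with r hr
  rw [Real.norm_eq_abs, abs_mul, abs_of_nonneg (hnn r), abs_of_nonneg (Real.rpow_nonneg hr.1.le _)]
  exact mul_le_mul_of_nonneg_right (hub r) (Real.rpow_nonneg hr.1.le _)

lemma step_up (hg0 : 0 < g0) (h0 : h 0 = g0) (hnn : ∀ r, 0 ≤ h r) (hub : ∀ r, h r ≤ g0)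
    (hlc : ∀ a b l : ℝ, 0 < l → l < 1 → h a ^ l * h b ^ (1 - l) ≤ h (l * a + (1 - l) * b))
    {p q : ℝ} (hp : 0 < p) (hpq : p ≤ q)
    (hint : IntegrableOn (fun r => h r * r ^ (p - 1)) (Ioi (0:ℝ)))
    (hIp : g0 / p ≤ ∫ r in Ioi (0:ℝ), h r * r ^ (p - 1)) :
    g0 / q ≤ ∫ r in Ioi (0:ℝ), h r * r ^ (q - 1) := by
  have hq : 0 < q := lt_of_lt_of_le hp hpq
  have hintq : IntegrableOn (fun r => h r * r ^ (q - 1)) (Ioi (0:ℝ)) :=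
    integrable_weight hg0 h0 hnn hub hlc hp hint hq
  have hindeq : ∀ s : ℝ, (fun r : ℝ => (Ioc (0:ℝ) 1).indicator (fun _ => g0) r * r ^ (s - 1))
      = (Ioc (0:ℝ) 1).indicator (fun x : ℝ => g0 * x ^ (s-1)) := by
    intro s; funext r; by_cases hr : r ∈ Ioc (0:ℝ) 1 <;> simp [hr]
  have hioc : ∀ s : ℝ, 0 < s → IntegrableOn (fun x : ℝ => g0 * x ^ (s-1)) (Ioc (0:ℝ) 1) := by
    intro s hs
    have h5 := intervalIntegral.intervalIntegrable_rpow'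
      (show (-1:ℝ) < s - 1 by linarith) (a := 0) (b := 1)
    rw [intervalIntegrable_iff_integrableOn_Ioc_of_le zero_le_one] at h5
    exact h5.const_mul g0
  have hindint : ∀ s : ℝ, 0 < s → Integrable
      (fun r : ℝ => (Ioc (0:ℝ) 1).indicator (fun _ => g0) r * r ^ (s - 1))
      (volume.restrict (Ioi (0:ℝ))) := by
    intro s hs
    rw [hindeq s]
    exact ((hioc s hs).integrable_indicator measurableSet_Ioc).integrableOn
  have hindval : ∀ s : ℝ, 0 < s → (∫ r in Ioi (0:ℝ),
      (Ioc (0:ℝ) 1).indicator (fun _ => g0) r * r ^ (s - 1)) = g0 / s := by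
    intro s hs
    rw [hindeq s, setIntegral_indicator measurableSet_Ioc,
      inter_eq_self_of_subset_right Ioc_subset_Ioi_self,
      ← intervalIntegral.integral_of_le zero_le_one,
      intervalIntegral.integral_const_mul, integral_rpow (Or.inl (by linarith : (-1:ℝ) < s - 1)),
      Real.one_rpow, Real.zero_rpow (by intro hcon; rw [sub_add_cancel] at hcon; exact hs.ne' hcon)]
    rw [show s - 1 + 1 = s by ring]
    ring
  have key : 0 ≤ ∫ r in Ioi (0:ℝ),
      (h r - (Ioc (0:ℝ) 1).indicator (fun _ => g0) r) * (r ^ (q-1) - r ^ (p-1)) := by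
    refine setIntegral_nonneg measurableSet_Ioi (fun r hr => ?_)
    have hrpos : (0:ℝ) < r := hr
    by_cases hr1 : r ≤ 1
    · have hind : (Ioc (0:ℝ) 1).indicator (fun _ : ℝ => g0) r = g0 := by
        simp [indicator_of_mem, mem_Ioc, hrpos, hr1]
      rw [hind]
      have h1 : h r - g0 ≤ 0 := by linarith [hub r]
      have h2 : r ^ (q-1) - r ^ (p-1) ≤ 0 := by
        have := Real.rpow_le_rpow_of_exponent_ge hrpos hr1 (by linarith : p - 1 ≤ q - 1)
        linarith
      have := mul_nonneg (neg_nonneg.2 h1) (neg_nonneg.2 h2)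
      rwa [neg_mul_neg] at this
    · have hind : (Ioc (0:ℝ) 1).indicator (fun _ : ℝ => g0) r = 0 := by
        simp [mem_Ioc, hr1]
      rw [hind, sub_zero]
      refine mul_nonneg (hnn r) ?_
      have := Real.rpow_le_rpow_of_exponent_le (le_of_not_ge hr1) (by linarith : p - 1 ≤ q - 1)
      linarith
  have expand : ∀ r : ℝ,
      (h r - (Ioc (0:ℝ) 1).indicator (fun _ => g0) r) * (r ^ (q-1) - r ^ (p-1)) =
      (h r * r ^ (q-1) - (Ioc (0:ℝ) 1).indicator (fun _ => g0) r * r ^ (q-1)) -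
      (h r * r ^ (p-1) - (Ioc (0:ℝ) 1).indicator (fun _ => g0) r * r ^ (p-1)) :=
    fun r => by ring
  rw [setIntegral_congr_fun measurableSet_Ioi (fun r _ => expand r)] at key
  have e0 : (∫ r in Ioi (0:ℝ),
      ((h r * r ^ (q-1) - (Ioc (0:ℝ) 1).indicator (fun _ => g0) r * r ^ (q-1)) -
       (h r * r ^ (p-1) - (Ioc (0:ℝ) 1).indicator (fun _ => g0) r * r ^ (p-1)))) =
      (∫ r in Ioi (0:ℝ), (h r * r ^ (q-1) - (Ioc (0:ℝ) 1).indicator (fun _ => g0) r * r ^ (q-1))) -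
      (∫ r in Ioi (0:ℝ), (h r * r ^ (p-1) - (Ioc (0:ℝ) 1).indicator (fun _ => g0) r * r ^ (p-1))) :=
    integral_sub (hintq.sub (hindint q hq)) (hint.sub (hindint p hp))
  have e1 : (∫ r in Ioi (0:ℝ), (h r * r ^ (q-1) - (Ioc (0:ℝ) 1).indicator (fun _ => g0) r * r ^ (q-1))) =
      (∫ r in Ioi (0:ℝ), h r * r ^ (q-1)) - (∫ r in Ioi (0:ℝ), (Ioc (0:ℝ) 1).indicator (fun _ => g0) r * r ^ (q-1)) :=
    integral_sub hintq (hindint q hq)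
  have e2 : (∫ r in Ioi (0:ℝ), (h r * r ^ (p-1) - (Ioc (0:ℝ) 1).indicator (fun _ => g0) r * r ^ (p-1))) =
      (∫ r in Ioi (0:ℝ), h r * r ^ (p-1)) - (∫ r in Ioi (0:ℝ), (Ioc (0:ℝ) 1).indicator (fun _ => g0) r * r ^ (p-1)) :=
    integral_sub hint (hindint p hp)
  rw [e0, e1, e2, hindval q hq, hindval p hp] at key
  linarith

lemma ball_lemma (hg0 : 0 < g0) (h0 : h 0 = g0) (hnn : ∀ r, 0 ≤ h r) (hub : ∀ r, h r ≤ g0)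
    (hlc : ∀ a b l : ℝ, 0 < l → l < 1 → h a ^ l * h b ^ (1 - l) ≤ h (l * a + (1 - l) * b))
    {p q : ℝ} (hp : 0 < p) (hpq : p ≤ q)
    (hintq : IntegrableOn (fun r => h r * r ^ (q - 1)) (Ioi (0:ℝ)))
    (hIq : g0 / q ≤ ∫ r in Ioi (0:ℝ), h r * r ^ (q - 1)) :
    g0 * Real.Gamma (1 + p) / (p * Real.Gamma (1 + q) ^ (p/q)) ≤
      ∫ r in Ioi (0:ℝ), h r * r ^ (p - 1) := by
  have hq : 0 < q := lt_of_lt_of_le hp hpq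
  set Iq := ∫ r in Ioi (0:ℝ), h r * r ^ (q - 1) with hIqdef
  have hIqpos : 0 < Iq := lt_of_lt_of_le (div_pos hg0 hq) hIq
  have hintp : IntegrableOn (fun r => h r * r ^ (p - 1)) (Ioi (0:ℝ)) := by
    have hA := integrable_Ioc hg0 h0 hnn hub hlc hp zero_lt_one
    have hB : IntegrableOn (fun r => h r * r ^ (p - 1)) (Ioi (1:ℝ)) := by
      refine Integrable.mono' (hintq.mono_set (Ioi_subset_Ioi zero_le_one))
        ((haesm hg0 h0 hnn hub hlc p).mono_measure
          (Measure.restrict_mono (Ioi_subset_Ioi zero_le_one) le_rfl)) ?_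
      filter_upwards [ae_restrict_mem measurableSet_Ioi] with r hr
      have hr1 : (1:ℝ) < r := hr
      rw [Real.norm_eq_abs, abs_mul, abs_of_nonneg (hnn r),
        abs_of_nonneg (Real.rpow_nonneg (by linarith) _)]
      exact mul_le_mul_of_nonneg_left
        (Real.rpow_le_rpow_of_exponent_le hr1.le (by linarith)) (hnn r)
    have hU := hA.union hB
    rwa [Ioc_union_Ioi_eq_Ioi zero_le_one] at hU
  set lam := (g0 * Real.Gamma q / Iq) ^ (1/q) with hlamdef
  have hbase : 0 < g0 * Real.Gamma q / Iq :=
    div_pos (mul_pos hg0 (Real.Gamma_pos_of_pos hq)) hIqpos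
  have hlampos : 0 < lam := Real.rpow_pos_of_pos hbase _
  have hlamq : lam ^ q = g0 * Real.Gamma q / Iq := by
    rw [hlamdef, ← Real.rpow_mul hbase.le, one_div_mul_cancel hq.ne', Real.rpow_one]
  have hHint : ∀ s : ℝ, 0 < s → IntegrableOn
      (fun r : ℝ => g0 * Real.exp (-(lam * r)) * r ^ (s - 1)) (Ioi (0:ℝ)) := by
    intro s hs
    have base := integrableOn_rpow_mul_exp_neg_mul_rpow
      (show (-1:ℝ) < s - 1 by linarith) zero_lt_one hlampos
    have h6 : IntegrableOn (fun x : ℝ => g0 * (x ^ (s-1) * Real.exp (-lam * x ^ (1:ℝ))))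
        (Ioi (0:ℝ)) := base.const_mul g0
    refine h6.congr_fun (fun r _ => ?_) measurableSet_Ioi
    dsimp only
    rw [Real.rpow_one, neg_mul]
    ring
  have hHval : ∀ s : ℝ, 0 < s → (∫ r in Ioi (0:ℝ), g0 * Real.exp (-(lam * r)) * r ^ (s - 1))
      = g0 * ((1/lam) ^ s * Real.Gamma s) := by
    intro s hs
    have hint2 := Real.integral_rpow_mul_exp_neg_mul_Ioi hs hlampos
    calc (∫ r in Ioi (0:ℝ), g0 * Real.exp (-(lam * r)) * r ^ (s - 1))
        = ∫ r in Ioi (0:ℝ), g0 * (r ^ (s-1) * Real.exp (-(lam * r))) := by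
          refine setIntegral_congr_fun measurableSet_Ioi (fun r _ => ?_)
          ring
      _ = g0 * ∫ r in Ioi (0:ℝ), r ^ (s-1) * Real.exp (-(lam * r)) := integral_const_mul _ _
      _ = g0 * ((1/lam) ^ s * Real.Gamma s) := by rw [hint2]
  have hHq : (∫ r in Ioi (0:ℝ), g0 * Real.exp (-(lam * r)) * r ^ (q - 1)) = Iq := by
    rw [hHval q hq, one_div, Real.inv_rpow hlampos.le, hlamq]
    field_simp
  set S := {r : ℝ | 0 ≤ r ∧ g0 * Real.exp (-(lam * r)) ≤ h r} with hSdef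
  have h0S : (0:ℝ) ∈ S := by
    refine ⟨le_refl 0, ?_⟩
    simp [h0]
  have step : ∀ r r' : ℝ, 0 < r → r < r' → g0 * Real.exp (-(lam * r')) ≤ h r' →
      g0 * Real.exp (-(lam * r)) ≤ h r := by
    intro r r' hr hrr' hr'
    have hr'pos : 0 < r' := hr.trans hrr'
    have hl0 : 0 < r / r' := div_pos hr hr'pos
    have hl1 : r / r' < 1 := (div_lt_one hr'pos).mpr hrr'
    have key := hlc r' 0 (r / r') hl0 hl1
    rw [mul_zero, add_zero, div_mul_cancel₀ _ hr'pos.ne', h0] at key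
    refine le_trans ?_ key
    have hHpos : (0:ℝ) < g0 * Real.exp (-(lam * r')) := mul_pos hg0 (Real.exp_pos _)
    have hmono1 : (g0 * Real.exp (-(lam * r'))) ^ (r/r') ≤ h r' ^ (r/r') :=
      Real.rpow_le_rpow hHpos.le hr' hl0.le
    have e1 : Real.exp (-(lam * r')) ^ (r/r') = Real.exp (-(lam * r)) := by
      rw [Real.rpow_def_of_pos (Real.exp_pos _), Real.log_exp]
      congr 1
      field_simp
    have e2 : g0 ^ (r/r') * g0 ^ (1 - r/r') = g0 := by
      rw [← Real.rpow_add hg0]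
      norm_num
    have e3 : (g0 * Real.exp (-(lam * r'))) ^ (r/r') * g0 ^ (1 - r/r')
        = g0 * Real.exp (-(lam * r)) := by
      rw [Real.mul_rpow hg0.le (Real.exp_pos _).le, e1, mul_right_comm, e2]
    calc g0 * Real.exp (-(lam * r))
        = (g0 * Real.exp (-(lam * r'))) ^ (r/r') * g0 ^ (1 - r/r') := e3.symm
      _ ≤ h r' ^ (r/r') * g0 ^ (1 - r/r') :=
          mul_le_mul_of_nonneg_right hmono1 (Real.rpow_nonneg hg0.le _)
  have hmain : g0 * ((1/lam) ^ p * Real.Gamma p) ≤ ∫ r in Ioi (0:ℝ), h r * r ^ (p - 1) := by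
    rw [← hHval p hp]
    by_cases hbdd : BddAbove S
    case neg =>
      refine setIntegral_mono_on (hHint p hp) hintp measurableSet_Ioi (fun r hr => ?_)
      obtain ⟨r', hr'S, hrr'⟩ := not_bddAbove_iff.1 hbdd r
      exact mul_le_mul_of_nonneg_right (step r r' hr hrr' hr'S.2)
        (Real.rpow_nonneg (le_of_lt hr) _)
    case pos =>
      set r0 := sSup S with hr0def
      have hr0 : 0 ≤ r0 := le_csSup hbdd h0S
      have habove : ∀ r, r0 < r → h r ≤ g0 * Real.exp (-(lam * r)) := by
        intro r hr
        by_contra hcon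
        push_neg at hcon
        have hrS : r ∈ S := ⟨hr0.trans hr.le, hcon.le⟩
        exact absurd (le_csSup hbdd hrS) (not_le.2 hr)
      have hbelow : ∀ r, 0 < r → r < r0 → g0 * Real.exp (-(lam * r)) ≤ h r := by
        intro r hrpos hr
        obtain ⟨r', hr'S, hrr'⟩ := exists_lt_of_lt_csSup ⟨0, h0S⟩ hr
        exact step r r' hrpos hrr' hr'S.2
      rcases hr0.eq_or_lt with hr00 | hr00
      · -- r0 = 0 : h ≤ H on Ioi 0 and q-integrals equal, so a.e. equal
        have hz : (∫ r in Ioi (0:ℝ),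
            (g0 * Real.exp (-(lam * r)) * r ^ (q-1) - h r * r ^ (q-1))) = 0 := by
          have e4 : (∫ r in Ioi (0:ℝ),
              (g0 * Real.exp (-(lam * r)) * r ^ (q-1) - h r * r ^ (q-1))) =
              (∫ r in Ioi (0:ℝ), g0 * Real.exp (-(lam * r)) * r ^ (q-1)) -
              (∫ r in Ioi (0:ℝ), h r * r ^ (q-1)) := integral_sub (hHint q hq) hintq
          rw [e4, hHq, ← hIqdef, sub_self]
        have hnonneg : (0:ℝ → ℝ) ≤ᵐ[volume.restrict (Ioi (0:ℝ))]
            (fun r => g0 * Real.exp (-(lam * r)) * r ^ (q-1) - h r * r ^ (q-1)) := by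
          filter_upwards [ae_restrict_mem measurableSet_Ioi] with r hr
          have hrpos : (0:ℝ) < r := hr
          have := mul_le_mul_of_nonneg_right (habove r (by rw [← hr00]; exact hrpos))
            (Real.rpow_nonneg hrpos.le (q-1))
          simpa using this
        have hae := (integral_eq_zero_iff_of_nonneg_ae hnonneg
          ((hHint q hq).sub hintq)).1 hz
        have hcongr : (fun r : ℝ => g0 * Real.exp (-(lam * r)) * r ^ (p-1))
            =ᵐ[volume.restrict (Ioi (0:ℝ))] (fun r => h r * r ^ (p-1)) := by
          filter_upwards [hae, ae_restrict_mem measurableSet_Ioi] with r hr1 hr2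
          have hrpos : (0:ℝ) < r := hr2
          have hB : (r:ℝ) ^ (q-1) ≠ 0 := (Real.rpow_pos_of_pos hrpos _).ne'
          have hval : g0 * Real.exp (-(lam * r)) * r ^ (q-1) = h r * r ^ (q-1) := by
            have hr1' : g0 * Real.exp (-(lam * r)) * r ^ (q-1) - h r * r ^ (q-1) = 0 := hr1
            linarith
          have hhH : g0 * Real.exp (-(lam * r)) = h r := mul_right_cancel₀ hB hval
          rw [hhH]
        exact le_of_eq (integral_congr_ae hcongr)
      · set c := r0 ^ (p - q) with hcdef
        have hptwise : ∀ r ∈ Ioi (0:ℝ),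
            0 ≤ (h r - g0 * Real.exp (-(lam * r))) * (r ^ (p-1) - c * r ^ (q-1)) := by
          intro r hr
          have hrpos : (0:ℝ) < r := hr
          rcases lt_trichotomy r r0 with hlt | heq | hgt
          · have h1 : 0 ≤ h r - g0 * Real.exp (-(lam * r)) :=
              sub_nonneg.2 (hbelow r hrpos hlt)
            have h2 : c * r ^ (q-1) ≤ r ^ (p-1) := by
              have e5 : r ^ (p-1) = r ^ (p - q) * r ^ (q-1) := by
                rw [← Real.rpow_add hrpos]
                congr 1
                ring
              rw [e5, hcdef]
              exact mul_le_mul_of_nonneg_right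
                (Real.rpow_le_rpow_of_nonpos hrpos hlt.le (by linarith))
                (Real.rpow_nonneg hrpos.le _)
            exact mul_nonneg h1 (sub_nonneg.2 h2)
          · have e5 : c * r ^ (q-1) = r ^ (p-1) := by
              rw [heq, hcdef, ← Real.rpow_add hr00]
              congr 1
              ring
            rw [← e5]
            simp
          · have h1 : h r - g0 * Real.exp (-(lam * r)) ≤ 0 :=
              sub_nonpos.2 (habove r hgt)
            have h2 : r ^ (p-1) ≤ c * r ^ (q-1) := by
              have e5 : r ^ (p-1) = r ^ (p - q) * r ^ (q-1) := by
                rw [← Real.rpow_add hrpos]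
                congr 1
                ring
              rw [e5, hcdef]
              exact mul_le_mul_of_nonneg_right
                (Real.rpow_le_rpow_of_nonpos hr00 hgt.le (by linarith))
                (Real.rpow_nonneg hrpos.le _)
            have := mul_nonneg (neg_nonneg.2 h1) (neg_nonneg.2 (sub_nonpos.2 h2))
            rwa [neg_mul_neg] at this
        have key := setIntegral_nonneg (μ := volume) measurableSet_Ioi hptwise
        have expand : ∀ r : ℝ,
            (h r - g0 * Real.exp (-(lam * r))) * (r ^ (p-1) - c * r ^ (q-1)) =
            (h r * r ^ (p-1) - g0 * Real.exp (-(lam * r)) * r ^ (p-1)) -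
            c * (h r * r ^ (q-1) - g0 * Real.exp (-(lam * r)) * r ^ (q-1)) :=
          fun r => by ring
        rw [setIntegral_congr_fun measurableSet_Ioi (fun r _ => expand r)] at key
        have e0 : (∫ r in Ioi (0:ℝ),
            ((h r * r ^ (p-1) - g0 * Real.exp (-(lam * r)) * r ^ (p-1)) -
             c * (h r * r ^ (q-1) - g0 * Real.exp (-(lam * r)) * r ^ (q-1)))) =
            ((∫ r in Ioi (0:ℝ), h r * r ^ (p-1)) -
             (∫ r in Ioi (0:ℝ), g0 * Real.exp (-(lam * r)) * r ^ (p-1))) -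
            c * ((∫ r in Ioi (0:ℝ), h r * r ^ (q-1)) -
             (∫ r in Ioi (0:ℝ), g0 * Real.exp (-(lam * r)) * r ^ (q-1))) := by
          have i0 : (∫ r in Ioi (0:ℝ),
              ((h r * r ^ (p-1) - g0 * Real.exp (-(lam * r)) * r ^ (p-1)) -
               c * (h r * r ^ (q-1) - g0 * Real.exp (-(lam * r)) * r ^ (q-1)))) =
              (∫ r in Ioi (0:ℝ), (h r * r ^ (p-1) - g0 * Real.exp (-(lam * r)) * r ^ (p-1))) -
              (∫ r in Ioi (0:ℝ), c * (h r * r ^ (q-1) - g0 * Real.exp (-(lam * r)) * r ^ (q-1))) :=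
            integral_sub (hintp.sub (hHint p hp)) ((hintq.sub (hHint q hq)).const_mul c)
          have i1 : (∫ r in Ioi (0:ℝ), (h r * r ^ (p-1) - g0 * Real.exp (-(lam * r)) * r ^ (p-1))) =
              (∫ r in Ioi (0:ℝ), h r * r ^ (p-1)) - (∫ r in Ioi (0:ℝ), g0 * Real.exp (-(lam * r)) * r ^ (p-1)) :=
            integral_sub hintp (hHint p hp)
          have i2 : (∫ r in Ioi (0:ℝ), (h r * r ^ (q-1) - g0 * Real.exp (-(lam * r)) * r ^ (q-1))) =
              (∫ r in Ioi (0:ℝ), h r * r ^ (q-1)) - (∫ r in Ioi (0:ℝ), g0 * Real.exp (-(lam * r)) * r ^ (q-1)) :=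
            integral_sub hintq (hHint q hq)
          have i3 : (∫ r in Ioi (0:ℝ), c * (h r * r ^ (q-1) - g0 * Real.exp (-(lam * r)) * r ^ (q-1))) =
              c * (∫ r in Ioi (0:ℝ), (h r * r ^ (q-1) - g0 * Real.exp (-(lam * r)) * r ^ (q-1))) :=
            integral_const_mul _ _
          rw [i0, i1, i3, i2]
        rw [e0, hHq, ← hIqdef, sub_self, mul_zero, sub_zero] at key
        linarith
  refine le_trans ?_ hmain
  have hΓp : Real.Gamma (1 + p) = p * Real.Gamma p := by
    rw [add_comm, Real.Gamma_add_one hp.ne']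
  have hlamqle : lam ^ q ≤ Real.Gamma (1 + q) := by
    rw [hlamq, add_comm, Real.Gamma_add_one hq.ne', div_le_iff₀ hIqpos]
    have hg0le : g0 ≤ Iq * q := by
      rw [← div_le_iff₀ hq] at *
      linarith [hIq]
    nlinarith [Real.Gamma_pos_of_pos hq]
  have hlampq : lam ^ p ≤ Real.Gamma (1 + q) ^ (p / q) := by
    have e : lam ^ p = (lam ^ q) ^ (p / q) := by
      rw [← Real.rpow_mul hlampos.le]
      congr 1
      field_simp
    rw [e]
    exact Real.rpow_le_rpow (Real.rpow_nonneg hlampos.le q) hlamqle (by positivity)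
  have hΓqpow : (0:ℝ) < Real.Gamma (1 + q) ^ (p / q) :=
    Real.rpow_pos_of_pos (Real.Gamma_pos_of_pos (by linarith)) _
  have hlamppos : 0 < lam ^ p := Real.rpow_pos_of_pos hlampos p
  have hfin : g0 * Real.Gamma (1+p) / (p * Real.Gamma (1+q) ^ (p/q)) =
      g0 * Real.Gamma p / Real.Gamma (1+q) ^ (p/q) := by
    rw [hΓp]
    field_simp
  rw [hfin]
  have h2 : g0 * Real.Gamma p / Real.Gamma (1+q) ^ (p/q) ≤ g0 * Real.Gamma p / lam ^ p := by
    apply div_le_div_of_nonneg_left _ hlamppos hlampq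
    positivity
  refine h2.trans (le_of_eq ?_)
  rw [one_div, Real.inv_rpow hlampos.le]
  ring

end BallAux

theorem ball_bodies_inclusions (n : ℕ)
    (g : EuclideanSpace ℝ (Fin n) → ℝ)
    (hg_nn : ∀ x, 0 ≤ g x)
    (hg_int : Integrable g)
    (hg_lc : ∀ x y : EuclideanSpace ℝ (Fin n), ∀ l : ℝ, 0 < l → l < 1 →
      g x ^ l * g y ^ (1 - l) ≤ g (l • x + (1 - l) • y))
    (hg0 : 0 < g 0)
    (hgmax : ∀ x, g x ≤ g 0)
    (p q : ℝ) (hp : 0 < p) (hpq : p ≤ q)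
    (Kt : ℝ → Set (EuclideanSpace ℝ (Fin n)))
    (hKt : ∀ s : ℝ, 0 < s →
      Kt s = {x | g 0 / s ≤ ∫ r in Ioi (0:ℝ), g (r • x) * r ^ (s - 1)}) :
    (Real.Gamma (1 + p) ^ (1/p) / Real.Gamma (1 + q) ^ (1/q)) • Kt q ⊆ Kt p ∧
    Kt p ⊆ Kt q := by
  have hq : 0 < q := lt_of_lt_of_le hp hpq
  constructor
  · -- left inclusion
    intro x hx
    set c := Real.Gamma (1 + p) ^ (1/p) / Real.Gamma (1 + q) ^ (1/q) with hcdef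
    have hΓp : 0 < Real.Gamma (1+p) := Real.Gamma_pos_of_pos (by linarith)
    have hΓq : 0 < Real.Gamma (1+q) := Real.Gamma_pos_of_pos (by linarith)
    have hc : 0 < c := div_pos (Real.rpow_pos_of_pos hΓp _) (Real.rpow_pos_of_pos hΓq _)
    rw [mem_smul_set] at hx
    obtain ⟨y, hy, rfl⟩ := hx
    rw [hKt q hq] at hy
    rw [hKt p hp]
    simp only [mem_setOf_eq] at hy ⊢
    have h0' : (fun r : ℝ => g (r • y)) 0 = g 0 := by simp
    have hnn' : ∀ r : ℝ, 0 ≤ (fun r : ℝ => g (r • y)) r := fun r => hg_nn _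
    have hub' : ∀ r : ℝ, (fun r : ℝ => g (r • y)) r ≤ g 0 := fun r => hgmax _
    have hlc' : ∀ a b l : ℝ, 0 < l → l < 1 →
        (fun r : ℝ => g (r • y)) a ^ l * (fun r : ℝ => g (r • y)) b ^ (1 - l) ≤
        (fun r : ℝ => g (r • y)) (l * a + (1 - l) * b) := by
      intro a b l hl hl'
      have h5 := hg_lc (a • y) (b • y) l hl hl'
      dsimp only
      rwa [smul_smul, smul_smul, ← add_smul] at h5
    have hint_q : IntegrableOn (fun r : ℝ => g (r • y) * r ^ (q - 1)) (Ioi (0:ℝ)) := by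
      by_contra hcon
      rw [MeasureTheory.integral_undef hcon] at hy
      have h6 : 0 < g 0 / q := div_pos hg0 hq
      linarith
    have hball := BallAux.ball_lemma hg0 h0' hnn' hub' hlc' hp hpq hint_q hy
    have hsub : (∫ r in Ioi (0:ℝ), g (r • (c • y)) * r ^ (p-1)) =
        (c ^ p)⁻¹ * ∫ r in Ioi (0:ℝ), g (r • y) * r ^ (p-1) := by
      have e1 : ∀ r : ℝ, g (r • (c • y)) * r ^ (p-1) =
          (fun s : ℝ => g (s • y) * (s / c) ^ (p-1)) (c * r) := by
        intro r
        dsimp only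
        rw [smul_smul, mul_comm r c, mul_div_cancel_left₀ _ hc.ne']
      rw [setIntegral_congr_fun measurableSet_Ioi (fun r _ => e1 r)]
      have e2 := MeasureTheory.integral_comp_mul_left_Ioi
        (fun s : ℝ => g (s • y) * (s / c) ^ (p-1)) 0 hc
      rw [mul_zero] at e2
      rw [e2, smul_eq_mul]
      have e3 : ∀ s ∈ Ioi (0:ℝ), g (s • y) * (s / c) ^ (p-1) =
          (c ^ (p-1))⁻¹ * (g (s • y) * s ^ (p-1)) := by
        intro s hs
        rw [Real.div_rpow (le_of_lt hs) hc.le]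
        field_simp
      rw [setIntegral_congr_fun measurableSet_Ioi e3, integral_const_mul]
      rw [← mul_assoc, ← mul_inv]
      have e4 : c ^ (p-1) * c = c ^ p := by
        nth_rewrite 2 [← Real.rpow_one c]
        rw [← Real.rpow_add hc]
        norm_num
      rw [mul_comm c (c ^ (p-1)), e4]
    rw [hsub]
    have hcp : c ^ p = Real.Gamma (1+p) / Real.Gamma (1+q) ^ (p/q) := by
      rw [hcdef, Real.div_rpow (Real.rpow_nonneg hΓp.le _) (Real.rpow_nonneg hΓq.le _),
        ← Real.rpow_mul hΓp.le, ← Real.rpow_mul hΓq.le, one_div_mul_cancel hp.ne',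
        Real.rpow_one, show (1:ℝ)/q * p = p/q by ring]
    have hcppos : 0 < c ^ p := Real.rpow_pos_of_pos hc p
    have hfin : c ^ p * (g 0 / p) = g 0 * Real.Gamma (1+p) / (p * Real.Gamma (1+q) ^ (p/q)) := by
      rw [hcp]
      have h7 : Real.Gamma (1+q) ^ (p/q) ≠ 0 := (Real.rpow_pos_of_pos hΓq _).ne'
      field_simp
    calc g 0 / p = (c^p)⁻¹ * (c^p * (g 0 / p)) := by field_simp
      _ = (c^p)⁻¹ * (g 0 * Real.Gamma (1+p) / (p * Real.Gamma (1+q) ^ (p/q))) := by rw [hfin]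
      _ ≤ (c^p)⁻¹ * ∫ r in Ioi (0:ℝ), g (r • y) * r ^ (p-1) :=
          mul_le_mul_of_nonneg_left hball (inv_nonneg.2 hcppos.le)
  · -- right inclusion
    intro x hx
    rw [hKt p hp] at hx
    rw [hKt q hq]
    simp only [mem_setOf_eq] at hx ⊢
    have h0' : (fun r : ℝ => g (r • x)) 0 = g 0 := by simp
    have hnn' : ∀ r : ℝ, 0 ≤ (fun r : ℝ => g (r • x)) r := fun r => hg_nn _
    have hub' : ∀ r : ℝ, (fun r : ℝ => g (r • x)) r ≤ g 0 := fun r => hgmax _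
    have hlc' : ∀ a b l : ℝ, 0 < l → l < 1 →
        (fun r : ℝ => g (r • x)) a ^ l * (fun r : ℝ => g (r • x)) b ^ (1 - l) ≤
        (fun r : ℝ => g (r • x)) (l * a + (1 - l) * b) := by
      intro a b l hl hl'
      have h5 := hg_lc (a • x) (b • x) l hl hl'
      dsimp only
      rwa [smul_smul, smul_smul, ← add_smul] at h5
    have hint : IntegrableOn (fun r : ℝ => g (r • x) * r ^ (p - 1)) (Ioi (0:ℝ)) := by
      by_contra hcon
      rw [MeasureTheory.integral_undef hcon] at hx
      have h6 : 0 < g 0 / p := div_pos hg0 hp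
      linarith
    exact BallAux.step_up hg0 h0' hnn' hub' hlc' hp hpq hint hx
end
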